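/- arXiv:1912.11392 — 4 statements merged into one kernel-verified Lean document; each statement's English description precedes it below -/
import Mathlib

section
/- Let K ≥ 1, let C be a K×K Hermitian complex matrix, h ∈ ℂ^K, and let ε ≥ 0, t ∈ ℝ, μ ≥ 0 be real numbers. Define the (K+1)×(K+1) Hermitian block matrix T = fromBlocks( μ·I_K + C , C h , (C h)† , h† C h − t − μ·ε² ), where C h is treated as a K×1 column, (C h)† as the conjugate-transpose 1×K row, and the (2,2) block is the 1×1 matrix with the indicated real entry. If T is positive semidefinite, then for every η ∈ ℂ^K with ‖η‖ ≤ ε, the (real) quadratic form (h + η)† C (h + η) satisfies (h + η)† C (h + η) ≥ t. -/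
open Matrix Complex ComplexOrder

lemma aux_col_mv {K : ℕ} (v : Fin K → ℂ) :
    Matrix.replicateCol (Fin 1) v *ᵥ (fun _ : Fin 1 => (1:ℂ)) = v := by
  funext i; simp [Matrix.mulVec, dotProduct]

lemma aux_row_dp {K : ℕ} (w η : Fin K → ℂ) :
    (star fun _ : Fin 1 => (1:ℂ)) ⬝ᵥ (Matrix.replicateRow (Fin 1) w *ᵥ η) = w ⬝ᵥ η := by
  simp [Matrix.mulVec, dotProduct]

lemma aux_of_dp (c : ℂ) :
    (star fun _ : Fin 1 => (1:ℂ)) ⬝ᵥ ((Matrix.of fun _ _ : Fin 1 => c) *ᵥ fun _ => (1:ℂ)) = c := by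
  simp [Matrix.mulVec, dotProduct]

/-- Sufficiency direction of Lemma 1: if the block matrix
`T = fromBlocks (μ I + C) (C h) ((C h)†) (h† C h − t − μ ε²)` is positive
semidefinite, then for every estimation error `η` with Euclidean norm at most
`ε`, the harvested energy `(h + η)† C (h + η)` is at least `t`. -/
theorem lmi_implies_robust_energy_constraint
    (K : ℕ) (hK : 1 ≤ K)
    (C : Matrix (Fin K) (Fin K) ℂ) (hC : C.IsHermitian)
    (h : Fin K → ℂ) (ε t μ : ℝ) (hε : 0 ≤ ε) (hμ : 0 ≤ μ)
    (hT : (Matrix.fromBlocks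
        ((μ : ℂ) • (1 : Matrix (Fin K) (Fin K) ℂ) + C)
        (Matrix.replicateCol (Fin 1) (C *ᵥ h))
        (Matrix.replicateRow (Fin 1) (star (C *ᵥ h)))
        (Matrix.of fun _ _ : Fin 1 =>
          star h ⬝ᵥ (C *ᵥ h) - (t : ℂ) - ((μ * ε ^ 2 : ℝ) : ℂ))).PosSemidef) :
    ∀ η : Fin K → ℂ, Real.sqrt (∑ i, ‖η i‖ ^ 2) ≤ ε →
      t ≤ (star (h + η) ⬝ᵥ (C *ᵥ (h + η))).re := by
  intro η hη
  have h0 := hT.dotProduct_mulVec_nonneg (Sum.elim η (fun _ : Fin 1 => (1:ℂ)))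
  have key : star (Sum.elim η (fun _ : Fin 1 => (1:ℂ))) ⬝ᵥ
      ((Matrix.fromBlocks
        ((μ : ℂ) • (1 : Matrix (Fin K) (Fin K) ℂ) + C)
        (Matrix.replicateCol (Fin 1) (C *ᵥ h))
        (Matrix.replicateRow (Fin 1) (star (C *ᵥ h)))
        (Matrix.of fun _ _ : Fin 1 =>
          star h ⬝ᵥ (C *ᵥ h) - (t : ℂ) - ((μ * ε ^ 2 : ℝ) : ℂ))) *ᵥ
        (Sum.elim η (fun _ : Fin 1 => (1:ℂ))))
      = star (h + η) ⬝ᵥ (C *ᵥ (h + η))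
        + ((μ : ℂ) * (star η ⬝ᵥ η) - t - ((μ * ε ^ 2 : ℝ) : ℂ)) := by
    simp only [Function.star_sumElim, fromBlocks_mulVec, sumElim_dotProduct_sumElim,
      add_mulVec, mulVec_add, dotProduct_add, add_dotProduct, smul_mulVec,
      dotProduct_smul, star_add, one_mulVec, smul_eq_mul, Sum.elim_comp_inl, Sum.elim_comp_inr,
      aux_col_mv, aux_row_dp, aux_of_dp]
    rw [star_mulVec, hC.eq, ← dotProduct_mulVec]
    ring
  rw [key] at h0
  have hS : star η ⬝ᵥ η = ((∑ i, ‖η i‖ ^ 2 : ℝ) : ℂ) := by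
    push_cast
    simp only [dotProduct, Pi.star_apply, Complex.star_def]
    congr 1; funext i
    rw [← Complex.normSq_eq_conj_mul_self, Complex.normSq_eq_norm_sq]
    norm_cast
  have hre := (Complex.le_def.mp h0).1
  rw [hS] at hre
  simp only [Complex.add_re, Complex.sub_re, Complex.mul_re, Complex.ofReal_re,
    Complex.ofReal_im, Complex.zero_re] at hre
  -- bound on ∑ ‖η i‖²
  have hSnn : 0 ≤ ∑ i, ‖η i‖ ^ 2 := Finset.sum_nonneg fun i _ => sq_nonneg _
  have hSle : ∑ i, ‖η i‖ ^ 2 ≤ ε ^ 2 := by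
    have := Real.sq_sqrt hSnn
    nlinarith [Real.sqrt_nonneg (∑ i, ‖η i‖ ^ 2)]
  nlinarith [hre, hμ, hSle]
end

section
/- (S-procedure for Hermitian quadratic functions.) Let K ≥ 1, let A_1, A_2 be K×K Hermitian complex matrices, b_1, b_2 ∈ ℂ^K, and c_1, c_2 ∈ ℝ. For g = 1, 2 define f_g(η) = η† A_g η + 2·Re(b_g† η) + c_g (a real-valued function of η ∈ ℂ^K), and define the (K+1)×(K+1) Hermitian block matrices M_g = fromBlocks( A_g , b_g , b_g† , c_g ). Suppose there exists η̂ ∈ ℂ^K with f_1(η̂) < 0. Then the implication (for all η ∈ ℂ^K, f_1(η) ≤ 0 → f_2(η) ≤ 0) holds if and only if there exists a real μ ≥ 0 such that μ·M_1 − M_2 is positive semidefinite (i.e., M_2 ⪯ μ·M_1 in the Loewner order). -/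
open Matrix Complex ComplexOrder

namespace SProc
variable {n : Type*} [Fintype n]




lemma quad_conj {M : Matrix n n ℂ} (hM : M.IsHermitian) (x : n → ℂ) :
    (starRingEnd ℂ) (star x ⬝ᵥ (M *ᵥ x)) = star x ⬝ᵥ (M *ᵥ x) := by
  have h1 : star x ⬝ᵥ (M *ᵥ x) = star (star (M *ᵥ x) ⬝ᵥ x) := star_dotProduct _ _
  calc (starRingEnd ℂ) (star x ⬝ᵥ (M *ᵥ x)) = star (star x ⬝ᵥ (M *ᵥ x)) := rfl
    _ = star (M *ᵥ x) ⬝ᵥ x := by rw [h1, star_star]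
    _ = (star x ᵥ* Mᴴ) ⬝ᵥ x := by rw [star_mulVec]
    _ = (star x ᵥ* M) ⬝ᵥ x := by rw [hM.eq]
    _ = star x ⬝ᵥ (M *ᵥ x) := (dotProduct_mulVec _ _ _).symm

lemma quad_im {M : Matrix n n ℂ} (hM : M.IsHermitian) (x : n → ℂ) :
    (star x ⬝ᵥ (M *ᵥ x)).im = 0 :=
  Complex.conj_eq_iff_im.mp (quad_conj hM x)

lemma cross_conj {M : Matrix n n ℂ} (hM : M.IsHermitian) (x y : n → ℂ) :
    star y ⬝ᵥ (M *ᵥ x) = (starRingEnd ℂ) (star x ⬝ᵥ (M *ᵥ y)) := by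
  have h1 : star x ⬝ᵥ (M *ᵥ y) = star (star (M *ᵥ y) ⬝ᵥ x) := star_dotProduct _ _
  calc star y ⬝ᵥ (M *ᵥ x) = (star y ᵥ* M) ⬝ᵥ x := dotProduct_mulVec _ _ _
    _ = (star y ᵥ* Mᴴ) ⬝ᵥ x := by rw [hM.eq]
    _ = star (M *ᵥ y) ⬝ᵥ x := by rw [star_mulVec]
    _ = star (star x ⬝ᵥ (M *ᵥ y)) := by rw [h1, star_star]

lemma quad_bilin (M : Matrix n n ℂ) (a b : ℂ) (x y : n → ℂ) :
    star (a • x + b • y) ⬝ᵥ (M *ᵥ (a • x + b • y)) =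
      star a * a * (star x ⬝ᵥ (M *ᵥ x)) + star a * b * (star x ⬝ᵥ (M *ᵥ y))
      + star b * a * (star y ⬝ᵥ (M *ᵥ x)) + star b * b * (star y ⬝ᵥ (M *ᵥ y)) := by
  simp only [star_add, star_smul, mulVec_add, mulVec_smul, dotProduct_add, add_dotProduct,
    smul_dotProduct, dotProduct_smul, smul_eq_mul]
  ring

lemma star_mul_self_eq (a : ℂ) : star a * a = (normSq a : ℂ) := by
  rw [Complex.star_def, ← Complex.mul_conj]; ring

lemma quad_re_expand {M : Matrix n n ℂ} (hM : M.IsHermitian) (a b : ℂ) (x y : n → ℂ) :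
    (star (a • x + b • y) ⬝ᵥ (M *ᵥ (a • x + b • y))).re =
      normSq a * (star x ⬝ᵥ (M *ᵥ x)).re + normSq b * (star y ⬝ᵥ (M *ᵥ y)).re
      + 2 * (star a * b * (star x ⬝ᵥ (M *ᵥ y))).re := by
  rw [quad_bilin, cross_conj hM x y, star_mul_self_eq, star_mul_self_eq]
  have e3 : star b * a * (starRingEnd ℂ) (star x ⬝ᵥ (M *ᵥ y))
      = (starRingEnd ℂ) (star a * b * (star x ⬝ᵥ (M *ᵥ y))) := by
    simp only [_root_.map_mul, Complex.star_def, Complex.conj_conj]; ring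
  rw [e3]
  have e4 : star a * b * (star x ⬝ᵥ (M *ᵥ y)) +
      (starRingEnd ℂ) (star a * b * (star x ⬝ᵥ (M *ᵥ y)))
      = ((2 * (star a * b * (star x ⬝ᵥ (M *ᵥ y))).re : ℝ) : ℂ) := Complex.add_conj _
  calc ((normSq a : ℂ) * (star x ⬝ᵥ (M *ᵥ x)) + star a * b * (star x ⬝ᵥ (M *ᵥ y))
      + (starRingEnd ℂ) (star a * b * (star x ⬝ᵥ (M *ᵥ y)))
      + (normSq b : ℂ) * (star y ⬝ᵥ (M *ᵥ y))).re
      = ((normSq a : ℂ) * (star x ⬝ᵥ (M *ᵥ x))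
        + ((2 * (star a * b * (star x ⬝ᵥ (M *ᵥ y))).re : ℝ) : ℂ)
        + (normSq b : ℂ) * (star y ⬝ᵥ (M *ᵥ y))).re := by
        rw [add_assoc ((normSq a : ℂ) * _), e4]
    _ = _ := by
        simp only [Complex.add_re, Complex.re_ofReal_mul, Complex.ofReal_re]; ring

lemma quad_smul (M : Matrix n n ℂ) (c : ℂ) (x : n → ℂ) :
    star (c • x) ⬝ᵥ (M *ᵥ (c • x)) = (normSq c : ℂ) * (star x ⬝ᵥ (M *ᵥ x)) := by
  calc star (c • x) ⬝ᵥ (M *ᵥ (c • x)) = star c * c * (star x ⬝ᵥ (M *ᵥ x)) := by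
        simp only [star_smul, mulVec_smul, smul_dotProduct, dotProduct_smul, smul_eq_mul]; ring
    _ = _ := by rw [star_mul_self_eq]


lemma normSq_abs_ne (w : ℂ) (h : w ≠ 0) : ((‖w‖ : ℝ) : ℂ) ≠ 0 := by
  exact Complex.ofReal_ne_zero.mpr (norm_ne_zero_iff.mpr h)

/-- There is a unit phase making `c * w` purely imaginary. -/
lemma exists_phase_re_zero (w : ℂ) : ∃ c : ℂ, normSq c = 1 ∧ (c * w).re = 0 := by
  rcases eq_or_ne w 0 with h | h
  · exact ⟨1, by simp, by simp [h]⟩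
  · refine ⟨I * (starRingEnd ℂ) w / (‖w‖ : ℂ), ?_, ?_⟩
    · rw [normSq_div, normSq_mul, normSq_I, normSq_conj, one_mul, normSq_ofReal,
        ← Complex.sq_norm, sq]
      exact div_self (mul_ne_zero (norm_ne_zero_iff.mpr h) (norm_ne_zero_iff.mpr h))
    · have e : I * (starRingEnd ℂ) w / (‖w‖ : ℂ) * w
          = I * ((normSq w / ‖w‖ : ℝ) : ℂ) := by
        push_cast
        rw [div_mul_eq_mul_div, mul_assoc, mul_comm ((starRingEnd ℂ) w) w, Complex.mul_conj,
          mul_div_assoc]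
      rw [e]
      simp [Complex.mul_re]

/-- There is a unit phase making `c * w` real nonpositive. -/
lemma exists_phase_re_nonpos (w : ℂ) : ∃ c : ℂ, normSq c = 1 ∧ (c * w).re ≤ 0 := by
  rcases eq_or_ne w 0 with h | h
  · exact ⟨1, by simp, by simp [h]⟩
  · refine ⟨-(starRingEnd ℂ) w / (‖w‖ : ℂ), ?_, ?_⟩
    · rw [normSq_div, normSq_neg, normSq_conj, normSq_ofReal, ← Complex.sq_norm, sq]
      exact div_self (mul_ne_zero (norm_ne_zero_iff.mpr h) (norm_ne_zero_iff.mpr h))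
    · have e : -(starRingEnd ℂ) w / (‖w‖ : ℂ) * w
          = ((-(normSq w) / ‖w‖ : ℝ) : ℂ) := by
        push_cast
        rw [div_mul_eq_mul_div, neg_mul, mul_comm ((starRingEnd ℂ) w) w, Complex.mul_conj]
      rw [e, Complex.ofReal_re]
      apply div_nonpos_of_nonpos_of_nonneg
      · simp [normSq_nonneg]
      · exact norm_nonneg w



lemma star_sum_elim {m : Type*} (η : m → ℂ) (τ : ℂ) :
    star (Sum.elim η (fun _ : Fin 1 => τ)) = Sum.elim (star η) (fun _ : Fin 1 => star τ) := by
  funext i; cases i <;> simp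

lemma blockQuad {m : Type*} [Fintype m] (A : Matrix m m ℂ) (b : m → ℂ) (c : ℝ)
    (η : m → ℂ) (τ : ℂ) :
    star (Sum.elim η (fun _ : Fin 1 => τ)) ⬝ᵥ
      ((fromBlocks A (replicateCol (Fin 1) b) (replicateRow (Fin 1) (star b)) (of fun _ _ : Fin 1 => (c : ℂ)))
        *ᵥ (Sum.elim η (fun _ : Fin 1 => τ)))
    = star η ⬝ᵥ (A *ᵥ η)
      + (star τ * (star b ⬝ᵥ η) + star (star τ * (star b ⬝ᵥ η)))
      + (normSq τ : ℂ) * c := by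
  rw [fromBlocks_mulVec, star_sum_elim, sumElim_dotProduct_sumElim]
  rw [Sum.elim_comp_inl, Sum.elim_comp_inr]
  have h1 : replicateCol (Fin 1) b *ᵥ (fun _ : Fin 1 => τ) = fun i => τ * b i := by
    funext i; simp [mulVec, dotProduct, Matrix.replicateCol_apply, mul_comm]
  have h2 : replicateRow (Fin 1) (star b) *ᵥ η = fun _ : Fin 1 => star b ⬝ᵥ η := by
    funext i; simp [mulVec, dotProduct, Matrix.replicateRow_apply]
  have h3 : (of fun _ _ : Fin 1 => (c : ℂ)) *ᵥ (fun _ : Fin 1 => τ) = fun _ : Fin 1 => c * τ := by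
    funext i; simp [mulVec, dotProduct]
  rw [h1, h2, h3, dotProduct_add, dotProduct_add]
  have h4 : star η ⬝ᵥ (fun i => τ * b i) = τ * star (star b ⬝ᵥ η) := by
    rw [show (fun i => τ * b i) = τ • b from rfl, dotProduct_smul, smul_eq_mul,
      star_dotProduct η b]
  have h5 : (fun _ : Fin 1 => star τ) ⬝ᵥ (fun _ : Fin 1 => star b ⬝ᵥ η)
      = star τ * (star b ⬝ᵥ η) := by simp [dotProduct]
  have h6 : (fun _ : Fin 1 => star τ) ⬝ᵥ (fun _ : Fin 1 => c * τ) = (normSq τ : ℂ) * c := by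
    simp only [dotProduct, Finset.univ_unique, Finset.sum_singleton]
    calc (starRingEnd ℂ) τ * ((c:ℂ) * τ) = (τ * (starRingEnd ℂ) τ) * c := by ring
      _ = (normSq τ : ℂ) * c := by rw [Complex.mul_conj]
  rw [h4, h5, h6]
  rw [show star (star τ * (star b ⬝ᵥ η)) = τ * star (star b ⬝ᵥ η) from by
    simp only [Complex.star_def, _root_.map_mul, Complex.conj_conj]]
  ring

lemma blockQuad_re {m : Type*} [Fintype m] (A : Matrix m m ℂ) (b : m → ℂ) (c : ℝ)
    (η : m → ℂ) (τ : ℂ) :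
    (star (Sum.elim η (fun _ : Fin 1 => τ)) ⬝ᵥ
      ((fromBlocks A (replicateCol (Fin 1) b) (replicateRow (Fin 1) (star b)) (of fun _ _ : Fin 1 => (c : ℂ)))
        *ᵥ (Sum.elim η (fun _ : Fin 1 => τ)))).re
    = (star η ⬝ᵥ (A *ᵥ η)).re + 2 * (star τ * (star b ⬝ᵥ η)).re + normSq τ * c := by
  rw [blockQuad]
  have := Complex.add_conj (star τ * (star b ⬝ᵥ η))
  rw [show (star (star τ * (star b ⬝ᵥ η)) : ℂ)
      = (starRingEnd ℂ) (star τ * (star b ⬝ᵥ η)) from rfl, this]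
  simp [Complex.add_re, Complex.re_ofReal_mul]

/-- The block matrix is Hermitian. -/
lemma blockHerm {m : Type*} [Fintype m] {A : Matrix m m ℂ} (hA : A.IsHermitian)
    (b : m → ℂ) (c : ℝ) :
    (fromBlocks A (replicateCol (Fin 1) b) (replicateRow (Fin 1) (star b))
      (of fun _ _ : Fin 1 => (c : ℂ))).IsHermitian := by
  unfold Matrix.IsHermitian
  rw [fromBlocks_conjTranspose, conjTranspose_replicateCol, conjTranspose_replicateRow, star_star, hA.eq]
  have : (of fun _ _ : Fin 1 => (c : ℂ))ᴴ = (of fun _ _ : Fin 1 => (c : ℂ)) := by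
    ext i j
    simp [Matrix.conjTranspose_apply, Complex.conj_ofReal]
  rw [this]

lemma joint_range_convex {M₁ M₂ : Matrix n n ℂ} (h₁ : M₁.IsHermitian) (h₂ : M₂.IsHermitian) :
    Convex ℝ {p : ℝ × ℝ | ∃ x : n → ℂ,
      p.1 = (star x ⬝ᵥ (M₁ *ᵥ x)).re ∧ p.2 = (star x ⬝ᵥ (M₂ *ᵥ x)).re} := by
  rintro p ⟨x, hp1, hp2⟩ q ⟨y, hq1, hq2⟩ t1 t2 ht1 ht2 hsum
  by_cases hpq : q = p
  · subst hpq
    refine ⟨x, ?_, ?_⟩ <;> simp only [Prod.fst_add, Prod.snd_add, Prod.smul_fst, Prod.smul_snd,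
      smul_eq_mul]
    · rw [← hp1]; linear_combination q.1 * hsum
    · rw [← hp2]; linear_combination q.2 * hsum
  -- Set up notation
  set u₁ : ℂ := star x ⬝ᵥ (M₁ *ᵥ y) with hu₁
  set u₂ : ℂ := star x ⬝ᵥ (M₂ *ᵥ y) with hu₂
  set v : ℝ × ℝ := q - p with hv
  have hvne : v ≠ 0 := sub_ne_zero.mpr hpq
  obtain ⟨c, hc1, hc2⟩ := exists_phase_re_zero ((v.2 : ℂ) * u₁ - (v.1 : ℂ) * u₂)
  set d₁ : ℝ := 2 * (c * u₁).re with hd₁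
  set d₂ : ℝ := 2 * (c * u₂).re with hd₂
  -- d is parallel to v
  have hdet : v.2 * d₁ - v.1 * d₂ = 0 := by
    have : (c * ((v.2 : ℂ) * u₁ - (v.1 : ℂ) * u₂)).re
        = v.2 * (c * u₁).re - v.1 * (c * u₂).re := by
      rw [mul_sub]
      rw [show c * ((v.2:ℂ) * u₁) = (v.2:ℂ) * (c * u₁) by ring,
          show c * ((v.1:ℂ) * u₂) = (v.1:ℂ) * (c * u₂) by ring]
      simp [Complex.sub_re, Complex.re_ofReal_mul]
    rw [this] at hc2
    rw [hd₁, hd₂]; ring_nf; linarith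
  obtain ⟨lam, hlam1, hlam2⟩ : ∃ lam : ℝ, d₁ = lam * v.1 ∧ d₂ = lam * v.2 := by
    by_cases hv1 : v.1 ≠ 0
    · refine ⟨d₁ / v.1, by field_simp, ?_⟩
      field_simp
      nlinarith [hdet]
    · have hv2 : v.2 ≠ 0 := by
        intro h2
        exact hvne (Prod.ext (not_not.mp hv1) h2)
      refine ⟨d₂ / v.2, ?_, by field_simp⟩
      rw [not_not] at hv1
      rw [hv1, mul_zero]
      have : v.2 * d₁ = 0 := by rw [hv1] at hdet; linarith
      rcases mul_eq_zero.mp this with h | h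
      · exact absurd h hv2
      · exact h
  -- the path
  set g : ℝ → ℝ := fun s => Real.sin s ^ 2 + lam * Real.sin s * Real.cos s with hg
  have hg0 : g 0 = 0 := by simp [hg]
  have hg1 : g (Real.pi / 2) = 1 := by simp [hg]
  have hgc : ContinuousOn g (Set.Icc 0 (Real.pi / 2)) := by
    apply Continuous.continuousOn
    continuity
  have hmem : t2 ∈ Set.Icc (g 0) (g (Real.pi / 2)) := by
    rw [hg0, hg1]; exact ⟨ht2, by linarith⟩
  obtain ⟨s, hs, hgs⟩ := intermediate_value_Icc (by positivity : (0:ℝ) ≤ Real.pi / 2) hgc hmem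
  -- the witness
  simp only [hg] at hgs
  have pyth := Real.sin_sq_add_cos_sq s
  have hv1 : v.1 = q.1 - p.1 := rfl
  have hv2 : v.2 = q.2 - p.2 := rfl
  rw [hv1] at hlam1
  rw [hv2] at hlam2
  refine ⟨(Real.cos s : ℂ) • x + ((Real.sin s : ℝ) * c) • y, ?_, ?_⟩
  · rw [quad_re_expand h₁]
    have hcross : (star ((Real.cos s : ℝ) : ℂ) * (((Real.sin s : ℝ) : ℂ) * c) * u₁).re
        = Real.cos s * (Real.sin s * (c * u₁).re) := by
      rw [Complex.star_def, Complex.conj_ofReal,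
        show ((Real.cos s : ℝ) : ℂ) * (((Real.sin s : ℝ) : ℂ) * c) * u₁
          = ((Real.cos s : ℝ) : ℂ) * (((Real.sin s : ℝ) : ℂ) * (c * u₁)) from by ring,
        Complex.re_ofReal_mul, Complex.re_ofReal_mul]
    rw [hcross, ← hp1, ← hq1]
    simp only [normSq_ofReal, normSq_mul, hc1, mul_one, Prod.fst_add, Prod.smul_fst,
      smul_eq_mul]
    linear_combination p.1 * hsum + (p.1 - q.1) * hgs - p.1 * pyth
      + (Real.cos s * Real.sin s) * hd₁ - (Real.cos s * Real.sin s) * hlam1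
  · rw [quad_re_expand h₂]
    have hcross : (star ((Real.cos s : ℝ) : ℂ) * (((Real.sin s : ℝ) : ℂ) * c) * u₂).re
        = Real.cos s * (Real.sin s * (c * u₂).re) := by
      rw [Complex.star_def, Complex.conj_ofReal,
        show ((Real.cos s : ℝ) : ℂ) * (((Real.sin s : ℝ) : ℂ) * c) * u₂
          = ((Real.cos s : ℝ) : ℂ) * (((Real.sin s : ℝ) : ℂ) * (c * u₂)) from by ring,
        Complex.re_ofReal_mul, Complex.re_ofReal_mul]
    rw [hcross, ← hp2, ← hq2]
    simp only [normSq_ofReal, normSq_mul, hc1, mul_one, Prod.snd_add, Prod.smul_snd,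
      smul_eq_mul]
    linear_combination p.2 * hsum + (p.2 - q.2) * hgs - p.2 * pyth
      + (Real.cos s * Real.sin s) * hd₂ - (Real.cos s * Real.sin s) * hlam2

lemma expand_line {A : Matrix n n ℂ} (hA : A.IsHermitian) (b : n → ℂ) (cc : ℝ)
    (f : (n → ℂ) → ℝ)
    (hf : ∀ η, f η = (star η ⬝ᵥ (A *ᵥ η)).re + 2 * (star b ⬝ᵥ η).re + cc)
    (ηhat η : n → ℂ) (c : ℂ) (hc : normSq c = 1) (s : ℝ) :
    f ((1 : ℂ) • ηhat + (((s : ℝ) : ℂ) * c) • η)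
      = f ηhat + 2 * s * (c * (star ηhat ⬝ᵥ (A *ᵥ η) + star b ⬝ᵥ η)).re
        + s ^ 2 * (star η ⬝ᵥ (A *ᵥ η)).re := by
  rw [hf, hf, quad_re_expand hA]
  have hb : star b ⬝ᵥ ((1 : ℂ) • ηhat + (((s : ℝ) : ℂ) * c) • η)
      = star b ⬝ᵥ ηhat + ((s : ℂ) * c) * (star b ⬝ᵥ η) := by
    simp [dotProduct_add, dotProduct_smul, smul_eq_mul]
  rw [hb]
  have e1 : (star (1 : ℂ) * (((s : ℝ) : ℂ) * c) * (star ηhat ⬝ᵥ (A *ᵥ η))).re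
      = s * (c * (star ηhat ⬝ᵥ (A *ᵥ η))).re := by
    rw [star_one, one_mul, mul_assoc, Complex.re_ofReal_mul]
  have e2 : (star b ⬝ᵥ ηhat + ((s : ℂ) * c) * (star b ⬝ᵥ η)).re
      = (star b ⬝ᵥ ηhat).re + s * (c * (star b ⬝ᵥ η)).re := by
    rw [Complex.add_re, mul_assoc, Complex.re_ofReal_mul]
  have e3 : (c * (star ηhat ⬝ᵥ (A *ᵥ η) + star b ⬝ᵥ η)).re
      = (c * (star ηhat ⬝ᵥ (A *ᵥ η))).re + (c * (star b ⬝ᵥ η)).re := by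
    rw [mul_add, Complex.add_re]
  rw [e1, e2, e3, normSq_one, normSq_mul, normSq_ofReal, hc]
  ring

lemma quad_A_le {A₁ A₂ : Matrix n n ℂ} (hA₁ : A₁.IsHermitian) (hA₂ : A₂.IsHermitian)
    (b₁ b₂ : n → ℂ) (c₁ c₂ : ℝ) (f₁ f₂ : (n → ℂ) → ℝ)
    (hf₁ : ∀ η, f₁ η = (star η ⬝ᵥ (A₁ *ᵥ η)).re + 2 * (star b₁ ⬝ᵥ η).re + c₁)
    (hf₂ : ∀ η, f₂ η = (star η ⬝ᵥ (A₂ *ᵥ η)).re + 2 * (star b₂ ⬝ᵥ η).re + c₂)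
    (himp : ∀ η, f₁ η ≤ 0 → f₂ η ≤ 0)
    (ηhat : n → ℂ) (hsl : f₁ ηhat < 0)
    (η : n → ℂ) (h1 : (star η ⬝ᵥ (A₁ *ᵥ η)).re ≤ 0) :
    (star η ⬝ᵥ (A₂ *ᵥ η)).re ≤ 0 := by
  by_contra h2
  push_neg at h2
  obtain ⟨c, hc1, hc2⟩ := exists_phase_re_nonpos (star ηhat ⬝ᵥ (A₁ *ᵥ η) + star b₁ ⬝ᵥ η)
  have key : ∀ s : ℝ, 0 ≤ s →
      f₂ ηhat + 2 * s * (c * (star ηhat ⬝ᵥ (A₂ *ᵥ η) + star b₂ ⬝ᵥ η)).re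
        + s ^ 2 * (star η ⬝ᵥ (A₂ *ᵥ η)).re ≤ 0 := by
    intro s hs
    rw [← expand_line hA₂ b₂ c₂ f₂ hf₂ ηhat η c hc1 s]
    apply himp
    rw [expand_line hA₁ b₁ c₁ f₁ hf₁ ηhat η c hc1 s]
    have t1 : 2 * s * (c * (star ηhat ⬝ᵥ (A₁ *ᵥ η) + star b₁ ⬝ᵥ η)).re ≤ 0 := by
      have := mul_nonpos_of_nonneg_of_nonpos (by linarith : (0:ℝ) ≤ 2 * s) hc2
      linarith
    have t2 : s ^ 2 * (star η ⬝ᵥ (A₁ *ᵥ η)).re ≤ 0 :=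
      mul_nonpos_of_nonneg_of_nonpos (sq_nonneg s) h1
    linarith
  set a : ℝ := f₂ ηhat with ha
  set r : ℝ := (c * (star ηhat ⬝ᵥ (A₂ *ᵥ η) + star b₂ ⬝ᵥ η)).re with hr
  set q : ℝ := (star η ⬝ᵥ (A₂ *ᵥ η)).re with hq
  set s : ℝ := max 1 ((1 + |a| + 2 * |r|) / q) with hsdef
  have hs1 : (1:ℝ) ≤ s := le_max_left _ _
  have hs0 : (0:ℝ) ≤ s := by linarith
  have hs2 : (1 + |a| + 2 * |r|) / q ≤ s := le_max_right _ _
  have hsq : 1 + |a| + 2 * |r| ≤ s * q := by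
    rw [div_le_iff₀ h2] at hs2; linarith
  have hfs := key s hs0
  have kk : s * (1 + |a| + 2 * |r|) ≤ s * (s * q) :=
    mul_le_mul_of_nonneg_left hsq hs0
  nlinarith [kk, hfs, neg_abs_le a, neg_abs_le r, abs_nonneg a, abs_nonneg r,
    mul_le_mul_of_nonneg_left hs1 (abs_nonneg a),
    mul_le_mul_of_nonneg_right (neg_abs_le r) (by linarith : (0:ℝ) ≤ 2 * s)]

lemma decomp {m : Type*} (x : m ⊕ Fin 1 → ℂ) :
    x = Sum.elim (x ∘ Sum.inl) (fun _ : Fin 1 => x (Sum.inr 0)) := by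
  funext i
  cases i with
  | inl a => rfl
  | inr b => rw [Subsingleton.elim b 0]; rfl

lemma quad_smul_re (M : Matrix n n ℂ) (c : ℂ) (x : n → ℂ) :
    (star (c • x) ⬝ᵥ (M *ᵥ (c • x))).re = normSq c * (star x ⬝ᵥ (M *ᵥ x)).re := by
  rw [quad_smul, Complex.re_ofReal_mul]

end SProc

open SProc


/-- S-procedure for Hermitian quadratic functions: given
`f_g η = η† A_g η + 2 Re (b_g† η) + c_g` and the block matrices
`M_g = fromBlocks A_g b_g b_g† c_g`, if `f₁` is strictly negative somewhere,
then `(∀ η, f₁ η ≤ 0 → f₂ η ≤ 0)` holds iff `M₂ ⪯ μ M₁` for some `μ ≥ 0`. -/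
theorem s_procedure_hermitian_quadratics
    (K : ℕ) (hK : 1 ≤ K)
    (A₁ A₂ : Matrix (Fin K) (Fin K) ℂ)
    (hA₁ : A₁.IsHermitian) (hA₂ : A₂.IsHermitian)
    (b₁ b₂ : Fin K → ℂ) (c₁ c₂ : ℝ)
    (f₁ f₂ : (Fin K → ℂ) → ℝ)
    (hf₁ : ∀ η, f₁ η = (star η ⬝ᵥ (A₁ *ᵥ η)).re + 2 * (star b₁ ⬝ᵥ η).re + c₁)
    (hf₂ : ∀ η, f₂ η = (star η ⬝ᵥ (A₂ *ᵥ η)).re + 2 * (star b₂ ⬝ᵥ η).re + c₂)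
    (M₁ M₂ : Matrix (Fin K ⊕ Fin 1) (Fin K ⊕ Fin 1) ℂ)
    (hM₁ : M₁ = Matrix.fromBlocks A₁ (Matrix.replicateCol (Fin 1) b₁)
      (Matrix.replicateRow (Fin 1) (star b₁)) (Matrix.of fun _ _ : Fin 1 => (c₁ : ℂ)))
    (hM₂ : M₂ = Matrix.fromBlocks A₂ (Matrix.replicateCol (Fin 1) b₂)
      (Matrix.replicateRow (Fin 1) (star b₂)) (Matrix.of fun _ _ : Fin 1 => (c₂ : ℂ)))
    (hslater : ∃ ηhat : Fin K → ℂ, f₁ ηhat < 0) :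
    (∀ η : Fin K → ℂ, f₁ η ≤ 0 → f₂ η ≤ 0) ↔
      ∃ μ : ℝ, 0 ≤ μ ∧ ((μ : ℂ) • M₁ - M₂).PosSemidef := by
  have hM₁h : M₁.IsHermitian := by rw [hM₁]; exact blockHerm hA₁ b₁ c₁
  have hM₂h : M₂.IsHermitian := by rw [hM₂]; exact blockHerm hA₂ b₂ c₂
  -- extension lemmas
  have hext₁ : ∀ η : Fin K → ℂ,
      (star (Sum.elim η (fun _ : Fin 1 => (1:ℂ))) ⬝ᵥ
        (M₁ *ᵥ Sum.elim η (fun _ : Fin 1 => (1:ℂ)))).re = f₁ η := by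
    intro η
    rw [hM₁, blockQuad_re, hf₁]
    simp [normSq_one]
  have hext₂ : ∀ η : Fin K → ℂ,
      (star (Sum.elim η (fun _ : Fin 1 => (1:ℂ))) ⬝ᵥ
        (M₂ *ᵥ Sum.elim η (fun _ : Fin 1 => (1:ℂ)))).re = f₂ η := by
    intro η
    rw [hM₂, blockQuad_re, hf₂]
    simp [normSq_one]
  obtain ⟨ηhat, hsl⟩ := hslater
  constructor
  · -- forward direction
    intro himp
    -- homogenized implication
    have hhom : ∀ x : Fin K ⊕ Fin 1 → ℂ,
        (star x ⬝ᵥ (M₁ *ᵥ x)).re ≤ 0 → (star x ⬝ᵥ (M₂ *ᵥ x)).re ≤ 0 := by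
      intro x hF1
      have hx := decomp x
      set η : Fin K → ℂ := x ∘ Sum.inl with hη
      set τ : ℂ := x (Sum.inr 0) with hτdef
      by_cases hτ : τ = 0
      · rw [hx, hτ] at hF1 ⊢
        rw [hM₁, blockQuad_re] at hF1
        rw [hM₂, blockQuad_re]
        simp only [star_zero, zero_mul, Complex.zero_re, mul_zero, normSq_zero, zero_mul,
          add_zero] at hF1 ⊢
        exact quad_A_le hA₁ hA₂ b₁ b₂ c₁ c₂ f₁ f₂ hf₁ hf₂ himp ηhat hsl η hF1
      · have hy : τ⁻¹ • x = Sum.elim (τ⁻¹ • η) (fun _ : Fin 1 => (1:ℂ)) := by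
          funext i
          cases i with
          | inl a => rfl
          | inr b =>
            rw [Subsingleton.elim b 0]
            show τ⁻¹ * x (Sum.inr 0) = 1
            rw [← hτdef, inv_mul_cancel₀ hτ]
        have h1 : (star (τ⁻¹ • x) ⬝ᵥ (M₁ *ᵥ (τ⁻¹ • x))).re ≤ 0 := by
          rw [quad_smul_re]
          exact mul_nonpos_of_nonneg_of_nonpos (normSq_nonneg _) hF1
        rw [hy, hext₁] at h1
        have h2 := himp _ h1
        rw [← hext₂, ← hy] at h2
        have hxx : x = τ • (τ⁻¹ • x) := by
          rw [smul_smul, mul_inv_cancel₀ hτ, one_smul]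
        calc (star x ⬝ᵥ (M₂ *ᵥ x)).re
            = (star (τ • (τ⁻¹ • x)) ⬝ᵥ (M₂ *ᵥ (τ • (τ⁻¹ • x)))).re := by rw [← hxx]
          _ = normSq τ * (star (τ⁻¹ • x) ⬝ᵥ (M₂ *ᵥ (τ⁻¹ • x))).re := quad_smul_re _ _ _
          _ ≤ 0 := mul_nonpos_of_nonneg_of_nonpos (normSq_nonneg _) h2
    -- separation
    set C : Set (ℝ × ℝ) := {p : ℝ × ℝ | ∃ x : Fin K ⊕ Fin 1 → ℂ,
      p.1 = (star x ⬝ᵥ (M₁ *ᵥ x)).re ∧ p.2 = (star x ⬝ᵥ (M₂ *ᵥ x)).re} with hC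
    set O : Set (ℝ × ℝ) := {p : ℝ × ℝ | p.1 < 0 ∧ 0 < p.2} with hO
    have hCconv : Convex ℝ C := joint_range_convex hM₁h hM₂h
    have hOopen : IsOpen O :=
      (isOpen_lt continuous_fst continuous_const).inter
        (isOpen_lt continuous_const continuous_snd)
    have hOconv : Convex ℝ O := by
      have h1 : Convex ℝ {p : ℝ × ℝ | p.1 < 0} :=
        convex_halfSpace_lt ⟨fun _ _ => rfl, fun _ _ => rfl⟩ 0
      have h2 : Convex ℝ {p : ℝ × ℝ | 0 < p.2} :=
        convex_halfSpace_gt ⟨fun _ _ => rfl, fun _ _ => rfl⟩ 0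
      exact h1.inter h2
    have hdisj : Disjoint O C := by
      rw [Set.disjoint_left]
      rintro p ⟨hp1, hp2⟩ ⟨x, hx1, hx2⟩
      have := hhom x (by rw [← hx1]; linarith)
      rw [← hx2] at this
      linarith
    obtain ⟨f, u, hfO, hfC⟩ := geometric_hahn_banach_open hOconv hOopen hCconv hdisj
    have h0C : ((0, 0) : ℝ × ℝ) ∈ C := by
      refine ⟨0, ?_, ?_⟩ <;> simp
    have hu1 : u ≤ 0 := by
      have := hfC _ h0C
      have hz : f ((0,0) : ℝ × ℝ) = 0 := by
        have : ((0,0) : ℝ × ℝ) = (0 : ℝ × ℝ) := rfl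
        rw [this, map_zero]
      linarith
    have hu2 : 0 ≤ u := by
      by_contra hu
      push_neg at hu
      set F₀ : ℝ := f ((-1, 1) : ℝ × ℝ) with hF₀
      have hin : ∀ ε : ℝ, 0 < ε → ε * F₀ < u := by
        intro ε hε
        have hmem : ((-ε, ε) : ℝ × ℝ) ∈ O := ⟨by simpa using hε, hε⟩
        have := hfO _ hmem
        have heq : ((-ε, ε) : ℝ × ℝ) = ε • ((-1, 1) : ℝ × ℝ) := by
          simp [Prod.ext_iff]
        rw [heq, f.map_smul, smul_eq_mul] at this
        exact this
      rcases le_or_gt 0 F₀ with h | h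
      · have := hin 1 one_pos
        nlinarith
      · have hεpos : 0 < u / (2 * F₀) := div_pos_of_neg_of_neg hu (by linarith)
        have := hin _ hεpos
        have : u / (2 * F₀) * F₀ = u / 2 := by
          have hne : F₀ ≠ 0 := ne_of_lt h
          field_simp
        nlinarith [hin _ hεpos]
    have huz : u = 0 := le_antisymm hu1 hu2
    set α : ℝ := f ((1, 0) : ℝ × ℝ) with hα
    set β : ℝ := f ((0, 1) : ℝ × ℝ) with hβ
    have hlin : ∀ a b : ℝ, f ((a, b) : ℝ × ℝ) = a * α + b * β := by
      intro a b
      have : ((a, b) : ℝ × ℝ) = a • ((1, 0) : ℝ × ℝ) + b • ((0, 1) : ℝ × ℝ) := by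
        simp [Prod.ext_iff]
      rw [this, map_add, f.map_smul, f.map_smul, smul_eq_mul, smul_eq_mul]
    have hO' : ∀ a b : ℝ, a < 0 → 0 < b → a * α + b * β < 0 := by
      intro a b ha hb
      have := hfO (a, b) ⟨ha, hb⟩
      rw [hlin, huz] at this
      exact this
    have hC' : ∀ x : Fin K ⊕ Fin 1 → ℂ,
        0 ≤ α * (star x ⬝ᵥ (M₁ *ᵥ x)).re + β * (star x ⬝ᵥ (M₂ *ᵥ x)).re := by
      intro x
      have := hfC ((star x ⬝ᵥ (M₁ *ᵥ x)).re, (star x ⬝ᵥ (M₂ *ᵥ x)).re) ⟨x, rfl, rfl⟩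
      rw [hlin, huz] at this
      linarith
    have hbeta : β ≤ 0 := by
      by_contra hb
      push_neg at hb
      have h := hO' (-1) ((1 + |α|) / β) (by norm_num)
        (div_pos (by positivity) hb)
      rw [div_mul_cancel₀ _ (ne_of_gt hb)] at h
      have := le_abs_self α
      linarith
    have halpha : 0 ≤ α := by
      by_contra ha
      push_neg at ha
      have h := hO' (-((1 + |β|) / (-α))) 1
        (by
          have : 0 < (1 + |β|) / (-α) := div_pos (by positivity) (by linarith)
          linarith)
        one_pos
      have he : -((1 + |β|) / (-α)) * α = 1 + |β| := by
        rw [div_neg, neg_neg, div_mul_cancel₀ _ (ne_of_lt ha)]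
      rw [he] at h
      have := neg_abs_le β
      linarith
    have hbeta' : β < 0 := by
      rcases lt_or_eq_of_le hbeta with h | h
      · exact h
      · exfalso
        have hC1 := hC' (Sum.elim ηhat (fun _ : Fin 1 => (1:ℂ)))
        rw [hext₁, hext₂, h] at hC1
        simp only [zero_mul, add_zero] at hC1
        have hα0 : α ≤ 0 := by
          by_contra hga
          push_neg at hga
          have := mul_neg_of_pos_of_neg hga hsl
          linarith
        have hO1 := hO' (-1) 1 (by norm_num) one_pos
        rw [h] at hO1
        nlinarith
    refine ⟨α / (-β), div_nonneg halpha (by linarith), posSemidef_iff_dotProduct_mulVec.mpr ⟨?_, ?_⟩⟩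
    · -- Hermitian
      unfold Matrix.IsHermitian
      rw [conjTranspose_sub, conjTranspose_smul, hM₁h.eq, hM₂h.eq, Complex.star_def,
        Complex.conj_ofReal]
    · -- nonneg
      intro x
      set z : ℂ := star x ⬝ᵥ (((α / (-β) : ℝ) : ℂ) • M₁ - M₂) *ᵥ x with hz
      have hherm : (((α / (-β) : ℝ) : ℂ) • M₁ - M₂).IsHermitian := by
        unfold Matrix.IsHermitian
        rw [conjTranspose_sub, conjTranspose_smul, hM₁h.eq, hM₂h.eq, Complex.star_def,
          Complex.conj_ofReal]
      have him : z.im = 0 := quad_im hherm x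
      have hre : z.re = (α / (-β)) * (star x ⬝ᵥ (M₁ *ᵥ x)).re - (star x ⬝ᵥ (M₂ *ᵥ x)).re := by
        rw [hz, sub_mulVec, dotProduct_sub, smul_mulVec, dotProduct_smul,
          smul_eq_mul, Complex.sub_re, Complex.re_ofReal_mul]
      rw [Complex.le_def]
      refine ⟨?_, by simp [him]⟩
      rw [Complex.zero_re, hre]
      have h0 := hC' x
      have heq : (α / (-β)) * (star x ⬝ᵥ (M₁ *ᵥ x)).re - (star x ⬝ᵥ (M₂ *ᵥ x)).re
          = (α * (star x ⬝ᵥ (M₁ *ᵥ x)).re + β * (star x ⬝ᵥ (M₂ *ᵥ x)).re) / (-β) := by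
        have hbne : β ≠ 0 := ne_of_lt hbeta'
        rw [div_mul_eq_mul_div, add_div, div_neg, div_neg,
          mul_comm β, mul_div_assoc, mul_div_assoc, div_self hbne, mul_one]
        ring
      rw [heq]
      exact div_nonneg h0 (by linarith)
  · -- backward direction
    rintro ⟨μ, hμ, hpsd⟩ η hη
    set x : Fin K ⊕ Fin 1 → ℂ := Sum.elim η (fun _ : Fin 1 => (1:ℂ)) with hxdef
    have h := (posSemidef_iff_dotProduct_mulVec.mp hpsd).2 x
    have hre : 0 ≤ (star x ⬝ᵥ (((μ : ℝ) : ℂ) • M₁ - M₂) *ᵥ x).re := by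
      have := (Complex.le_def.mp h).1
      simpa using this
    rw [sub_mulVec, dotProduct_sub, smul_mulVec, dotProduct_smul, smul_eq_mul,
      Complex.sub_re, Complex.re_ofReal_mul, hxdef, hext₁, hext₂] at hre
    nlinarith
end

section
/- (Lemma 1.) Let K ≥ 1, let C be a K×K Hermitian positive semidefinite complex matrix, h ∈ ℂ^K, ε > 0, and t ∈ ℝ. Then the robust constraint 'for every η ∈ ℂ^K with ‖η‖ ≤ ε, (h + η)† C (h + η) ≥ t' holds if and only if there exists a real μ ≥ 0 such that the (K+1)×(K+1) Hermitian block matrix T(C, t, μ) = fromBlocks( μ·I_K + C , C h , (C h)† , h† C h − t − μ·ε² ) is positive semidefinite. -/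
open Matrix Complex ComplexOrder

namespace RobustLMI

variable {K : ℕ}

theorem herm_conj (M : Matrix (Fin K) (Fin K) ℂ) (hM : M.IsHermitian) (x y : Fin K → ℂ) :
    star (star x ⬝ᵥ (M *ᵥ y)) = star y ⬝ᵥ (M *ᵥ x) := by
  rw [star_dotProduct, star_star, star_mulVec, hM.eq, dotProduct_mulVec]

theorem herm_re (M : Matrix (Fin K) (Fin K) ℂ) (hM : M.IsHermitian) (x y : Fin K → ℂ) :
    (star x ⬝ᵥ (M *ᵥ y)).re = (star y ⬝ᵥ (M *ᵥ x)).re := by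
  rw [← herm_conj M hM y x]; exact Complex.conj_re _

theorem herm_im (M : Matrix (Fin K) (Fin K) ℂ) (hM : M.IsHermitian) (x : Fin K → ℂ) :
    (star x ⬝ᵥ (M *ᵥ x)).im = 0 :=
  Complex.conj_eq_iff_im.mp (herm_conj M hM x x)

theorem expand_re (M : Matrix (Fin K) (Fin K) ℂ) (hM : M.IsHermitian) (a b : Fin K → ℂ) :
    (star (a + b) ⬝ᵥ (M *ᵥ (a + b))).re =
      (star a ⬝ᵥ (M *ᵥ a)).re + 2 * (star b ⬝ᵥ (M *ᵥ a)).re + (star b ⬝ᵥ (M *ᵥ b)).re := by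
  rw [star_add, add_dotProduct, mulVec_add, dotProduct_add, dotProduct_add]
  simp only [Complex.add_re]
  rw [herm_re M hM a b]
  ring

theorem lin_add_re (a b w : Fin K → ℂ) :
    (star (a + b) ⬝ᵥ w).re = (star a ⬝ᵥ w).re + (star b ⬝ᵥ w).re := by
  rw [star_add, add_dotProduct, Complex.add_re]

theorem lin_smul_re (s : ℝ) (a w : Fin K → ℂ) :
    (star ((s : ℂ) • a) ⬝ᵥ w).re = s * (star a ⬝ᵥ w).re := by
  rw [star_smul, smul_dotProduct]
  simp [Complex.re_ofReal_mul, smul_eq_mul]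

theorem lin_neg_re (a w : Fin K → ℂ) : (star (-a) ⬝ᵥ w).re = -(star a ⬝ᵥ w).re := by
  rw [star_neg, neg_dotProduct, Complex.neg_re]

theorem dot_self_eq (x : Fin K → ℂ) :
    star x ⬝ᵥ x = ((∑ i, ‖x i‖ ^ 2 : ℝ) : ℂ) := by
  push_cast
  simp only [dotProduct, Pi.star_apply]
  refine Finset.sum_congr rfl fun i _ => ?_
  rw [Complex.star_def, mul_comm, Complex.mul_conj, Complex.normSq_eq_norm_sq]
  push_cast
  ring

theorem col_mulVec_one (w : Fin K → ℂ) (y : Fin 1 → ℂ) :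
    Matrix.replicateCol (Fin 1) w *ᵥ y = y 0 • w := by
  funext i; simp [Matrix.mulVec, dotProduct, mul_comm]

theorem row_mulVec_one (v : Fin K → ℂ) (x : Fin K → ℂ) :
    Matrix.replicateRow (Fin 1) v *ᵥ x = fun _ => v ⬝ᵥ x := by
  funext i; simp [Matrix.mulVec]

theorem of_one_mulVec (d : ℂ) (y : Fin 1 → ℂ) :
    (Matrix.of fun _ _ : Fin 1 => d) *ᵥ y = fun _ => d * y 0 := by
  funext i; simp [Matrix.mulVec, dotProduct]

theorem dot_fin1 (a b : Fin 1 → ℂ) : a ⬝ᵥ b = a 0 * b 0 := by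
  simp [dotProduct]

/-- the quadratic form of the block matrix, expanded. -/
theorem F_expand (C : Matrix (Fin K) (Fin K) ℂ) (h : Fin K → ℂ) (d : ℂ) (μ : ℝ)
    (x : Fin K → ℂ) (c : ℂ) :
    star (Sum.elim x (fun _ : Fin 1 => c)) ⬝ᵥ
      ((Matrix.fromBlocks ((μ : ℂ) • (1 : Matrix (Fin K) (Fin K) ℂ) + C)
        (Matrix.replicateCol (Fin 1) (C *ᵥ h)) (Matrix.replicateRow (Fin 1) (star (C *ᵥ h)))
        (Matrix.of fun _ _ : Fin 1 => d)) *ᵥ Sum.elim x (fun _ : Fin 1 => c)) =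
    (μ : ℂ) * (star x ⬝ᵥ x) + star x ⬝ᵥ (C *ᵥ x) + c * (star x ⬝ᵥ (C *ᵥ h))
      + (starRingEnd ℂ) c * (star (C *ᵥ h) ⬝ᵥ x) + (starRingEnd ℂ) c * c * d := by
  rw [fromBlocks_mulVec, Function.star_sumElim, sumElim_dotProduct_sumElim,
    col_mulVec_one, row_mulVec_one, of_one_mulVec, dot_fin1]
  simp only [add_mulVec, smul_mulVec, one_mulVec, dotProduct_add, dotProduct_smul,
    Pi.star_apply, Sum.elim_inl, Sum.elim_inr]
  ring_nf
  simp [smul_eq_mul]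
  ring

/-- scaling of the expanded quadratic form -/
theorem E_scale (C : Matrix (Fin K) (Fin K) ℂ) (h : Fin K → ℂ) (d : ℂ) (μ : ℝ)
    (z : Fin K → ℂ) (c : ℂ) :
    (μ : ℂ) * (star (c • z) ⬝ᵥ (c • z)) + star (c • z) ⬝ᵥ (C *ᵥ (c • z))
      + c * (star (c • z) ⬝ᵥ (C *ᵥ h)) + (starRingEnd ℂ) c * (star (C *ᵥ h) ⬝ᵥ (c • z))
      + (starRingEnd ℂ) c * c * d =
    (starRingEnd ℂ) c * c * ((μ : ℂ) * (star z ⬝ᵥ z) + star z ⬝ᵥ (C *ᵥ z)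
      + 1 * (star z ⬝ᵥ (C *ᵥ h)) + (starRingEnd ℂ) 1 * (star (C *ᵥ h) ⬝ᵥ z)
      + (starRingEnd ℂ) 1 * 1 * d) := by
  simp only [star_smul, smul_dotProduct, dotProduct_smul, mulVec_smul, smul_eq_mul,
    Complex.star_def, RingHom.map_one]
  ring

/-- The value of the expanded form at `(x, 1)` is real. -/
theorem E_one (C : Matrix (Fin K) (Fin K) ℂ) (hC : C.IsHermitian) (h : Fin K → ℂ)
    (t s : ℝ) (μ : ℝ) (x : Fin K → ℂ) :
    (μ : ℂ) * (star x ⬝ᵥ x) + star x ⬝ᵥ (C *ᵥ x)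
      + 1 * (star x ⬝ᵥ (C *ᵥ h)) + (starRingEnd ℂ) 1 * (star (C *ᵥ h) ⬝ᵥ x)
      + (starRingEnd ℂ) 1 * 1 * (star h ⬝ᵥ (C *ᵥ h) - (t : ℂ) - ((s : ℝ) : ℂ)) =
    (((star (h + x) ⬝ᵥ (C *ᵥ (h + x))).re + μ * (∑ i, ‖x i‖ ^ 2) - t - s : ℝ) : ℂ) := by
  have h1 : star (C *ᵥ h) ⬝ᵥ x = star (star x ⬝ᵥ (C *ᵥ h)) := by
    rw [star_dotProduct]
  have h4 := expand_re C hC h x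
  have h2 : star h ⬝ᵥ (C *ᵥ h) = (((star h ⬝ᵥ (C *ᵥ h)).re : ℝ) : ℂ) := by
    apply Complex.ext
    · simp
    · simp [herm_im C hC h]
  rw [RingHom.map_one, one_mul, one_mul, one_mul, h1, dot_self_eq, h2]
  apply Complex.ext
  · simp only [one_mul, Complex.add_re, Complex.sub_re, Complex.ofReal_re, Complex.re_ofReal_mul,
      Complex.star_def, Complex.conj_re, h4]
    ring
  · simp only [one_mul, Complex.add_im, Complex.sub_im, Complex.ofReal_im, Complex.im_ofReal_mul,
      Complex.star_def, Complex.conj_im, herm_im C hC x, herm_im C hC h]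
    ring

theorem lmi_iff (C : Matrix (Fin K) (Fin K) ℂ) (hC : C.PosSemidef) (h : Fin K → ℂ)
    (ε t μ : ℝ) (hμ : 0 ≤ μ) :
    (Matrix.fromBlocks
          ((μ : ℂ) • (1 : Matrix (Fin K) (Fin K) ℂ) + C)
          (Matrix.replicateCol (Fin 1) (C *ᵥ h))
          (Matrix.replicateRow (Fin 1) (star (C *ᵥ h)))
          (Matrix.of fun _ _ : Fin 1 =>
            star h ⬝ᵥ (C *ᵥ h) - (t : ℂ) - ((μ * ε ^ 2 : ℝ) : ℂ))).PosSemidef ↔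
      ∀ x : Fin K → ℂ,
        t + μ * ε ^ 2 ≤ (star (h + x) ⬝ᵥ (C *ᵥ (h + x))).re + μ * (∑ i, ‖x i‖ ^ 2) := by
  constructor
  · intro hT x
    have h0 := hT.dotProduct_mulVec_nonneg (Sum.elim x (fun _ : Fin 1 => 1))
    rw [F_expand, E_one C hC.1 h t (μ * ε ^ 2) μ x, Complex.zero_le_real] at h0
    linarith
  · intro H
    refine Matrix.PosSemidef.of_dotProduct_mulVec_nonneg ?_ ?_
    · rw [Matrix.isHermitian_fromBlocks_iff]
      refine ⟨Matrix.IsHermitian.add (by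
          rw [Matrix.IsHermitian, Matrix.conjTranspose_smul, Matrix.conjTranspose_one,
            Complex.star_def, Complex.conj_ofReal]) hC.1,
        Matrix.conjTranspose_replicateCol _, by rw [Matrix.conjTranspose_replicateRow, star_star], ?_⟩
      have hreal : star (star h ⬝ᵥ (C *ᵥ h) - (t : ℂ) - ((μ * ε ^ 2 : ℝ) : ℂ)) =
          star h ⬝ᵥ (C *ᵥ h) - (t : ℂ) - ((μ * ε ^ 2 : ℝ) : ℂ) := by
        simp only [star_sub, herm_conj C hC.1 h h, Complex.star_def, Complex.conj_ofReal]
      ext i j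
      simp only [Matrix.conjTranspose_apply, Matrix.of_apply]
      exact hreal
    · intro v
      have hv : v = Sum.elim (v ∘ Sum.inl) (fun _ : Fin 1 => v (Sum.inr 0)) := by
        funext i
        cases i with
        | inl i => rfl
        | inr j => rw [Subsingleton.elim j 0]; rfl
      rw [hv, F_expand]
      set x := v ∘ Sum.inl
      set c := v (Sum.inr 0)
      by_cases hc : c = 0
      · rw [hc]
        simp only [zero_mul, mul_zero, map_zero, add_zero]
        have h1 : 0 ≤ (μ : ℂ) * (star x ⬝ᵥ x) := by
          rw [dot_self_eq, ← Complex.ofReal_mul, Complex.zero_le_real]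
          have : (0:ℝ) ≤ ∑ i, ‖x i‖ ^ 2 := by positivity
          positivity
        exact add_nonneg h1 (hC.dotProduct_mulVec_nonneg x)
      · have hx : x = c • (c⁻¹ • x) := by
          rw [smul_smul, mul_inv_cancel₀ hc, one_smul]
        rw [hx, E_scale, E_one C hC.1 h t (μ * ε ^ 2) μ (c⁻¹ • x)]
        have h1 : ((starRingEnd ℂ) c * c : ℂ) = ((Complex.normSq c : ℝ) : ℂ) := by
          rw [mul_comm, Complex.mul_conj]
        rw [h1, ← Complex.ofReal_mul, Complex.zero_le_real]
        have h2 := H (c⁻¹ • x)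
        have h3 : (0:ℝ) ≤ Complex.normSq c := Complex.normSq_nonneg c
        nlinarith

theorem aux0 (r q δ : ℝ) (hq : 0 ≤ q) (hδ : 0 < δ)
    (H : ∀ s : ℝ, 0 < s → s ≤ δ → 0 ≤ 2 * s * r + s ^ 2 * q) : 0 ≤ r := by
  by_contra hr
  push_neg at hr
  have hq1 : (0:ℝ) < q + 1 := by linarith
  set s := min δ (-r / (q + 1)) with hs
  have hs0 : 0 < s := lt_min hδ (div_pos (by linarith) hq1)
  have h1 := H s hs0 (min_le_left _ _)
  have h2 : s * q ≤ -r := by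
    have hsr : s ≤ -r / (q + 1) := min_le_right _ _
    calc s * q ≤ (-r / (q + 1)) * q := mul_le_mul_of_nonneg_right hsr hq
      _ ≤ -r := by rw [div_mul_eq_mul_div, div_le_iff₀ hq1]; nlinarith
  nlinarith [mul_le_mul_of_nonneg_left h2 hs0.le, mul_pos hs0 (neg_pos.2 hr)]

theorem aux_dless (a b : ℝ) (H : ∀ δ : ℝ, 0 < δ → δ * b ≤ a) : 0 ≤ a := by
  by_contra ha
  push_neg at ha
  rcases le_or_gt 0 b with hb | hb
  · have := H 1 one_pos; nlinarith
  · have hpos : 0 < a / (2 * b) := div_pos_of_neg_of_neg ha (by linarith)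
    have h1 := H _ hpos
    have hb0 : b ≠ 0 := ne_of_lt hb
    have heq : a / (2 * b) * b = a / 2 := by field_simp
    rw [heq] at h1
    linarith

end RobustLMI

open RobustLMI

/-- Lemma 1 of the paper: for a Hermitian positive semidefinite transmit
covariance `C`, estimated channel `h`, error bound `ε > 0` and level `t`, the
robust constraint `∀ η, ‖η‖ ≤ ε → (h + η)† C (h + η) ≥ t` holds iff there is a
real `μ ≥ 0` such that the block matrix
`T(C, t, μ) = fromBlocks (μ I + C) (C h) ((C h)†) (h† C h − t − μ ε²)` is
positive semidefinite. -/
theorem robust_energy_constraint_iff_lmi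
    (K : ℕ) (hK : 1 ≤ K)
    (C : Matrix (Fin K) (Fin K) ℂ) (hC : C.PosSemidef)
    (h : Fin K → ℂ) (ε : ℝ) (hε : 0 < ε) (t : ℝ) :
    (∀ η : Fin K → ℂ, Real.sqrt (∑ i, ‖η i‖ ^ 2) ≤ ε →
        t ≤ (star (h + η) ⬝ᵥ (C *ᵥ (h + η))).re) ↔
      ∃ μ : ℝ, 0 ≤ μ ∧
        (Matrix.fromBlocks
          ((μ : ℂ) • (1 : Matrix (Fin K) (Fin K) ℂ) + C)
          (Matrix.replicateCol (Fin 1) (C *ᵥ h))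
          (Matrix.replicateRow (Fin 1) (star (C *ᵥ h)))
          (Matrix.of fun _ _ : Fin 1 =>
            star h ⬝ᵥ (C *ᵥ h) - (t : ℂ) - ((μ * ε ^ 2 : ℝ) : ℂ))).PosSemidef := by
  constructor
  · intro H
    have H' : ∀ x : Fin K → ℂ, (∑ i, ‖x i‖ ^ 2) ≤ ε ^ 2 →
        t ≤ (star (h + x) ⬝ᵥ (C *ᵥ (h + x))).re := fun x hx =>
      H x (Real.sqrt_le_iff.mpr ⟨hε.le, hx⟩)
    set g : (Fin K → ℂ) → ℝ := fun x => (star (h + x) ⬝ᵥ (C *ᵥ (h + x))).re with hg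
    set n2 : (Fin K → ℂ) → ℝ := fun x => ∑ i, ‖x i‖ ^ 2 with hn2
    set S : Set (Fin K → ℂ) := {x | n2 x ≤ ε ^ 2} with hS
    have hn2cont : Continuous n2 := by
      apply continuous_finset_sum
      intro i _
      exact (continuous_apply i).norm.pow 2
    have hSclosed : IsClosed S := isClosed_le hn2cont continuous_const
    have hSbdd : Bornology.IsBounded S := by
      apply (Metric.isBounded_closedBall (x := (0 : Fin K → ℂ)) (r := ε)).subset
      intro x hx
      rw [Metric.mem_closedBall, dist_zero_right, pi_norm_le_iff_of_nonneg hε.le]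
      intro i
      have h1 : ‖x i‖ ^ 2 ≤ ε ^ 2 :=
        le_trans (Finset.single_le_sum (f := fun j => ‖x j‖ ^ 2)
          (fun j _ => by positivity) (Finset.mem_univ i)) hx
      nlinarith [norm_nonneg (x i), hε.le]
    have hScompact : IsCompact S := Metric.isCompact_of_isClosed_isBounded hSclosed hSbdd
    have hSne : S.Nonempty := ⟨0, by simp [hS, hn2]; positivity⟩
    have hgcont : Continuous g := by
      have hgeq : g = fun x => ∑ i,
          ((starRingEnd ℂ) (h i + x i) * ∑ j, C i j * (h j + x j)).re := by
        funext x
        simp only [hg, dotProduct, Matrix.mulVec, Pi.star_apply, Pi.add_apply,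
          Complex.star_def, Complex.re_sum]
      rw [hgeq]
      apply continuous_finset_sum
      intro i _
      apply Complex.continuous_re.comp
      apply Continuous.mul
      · exact Complex.continuous_conj.comp (continuous_const.add (continuous_apply i))
      · exact continuous_finset_sum _ fun j _ =>
          continuous_const.mul (continuous_const.add (continuous_apply j))
    obtain ⟨x₀, hx₀S, hmin⟩ := hScompact.exists_isMinOn hSne hgcont.continuousOn
    set u : Fin K → ℂ := C *ᵥ (h + x₀) with hu
    set r : (Fin K → ℂ) → ℝ := fun w => (star w ⬝ᵥ u).re with hr
    set p : (Fin K → ℂ) → ℝ := fun w => (star w ⬝ᵥ x₀).re with hp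
    set q : (Fin K → ℂ) → ℝ := fun w => (star w ⬝ᵥ (C *ᵥ w)).re with hq
    have hqnn : ∀ w, 0 ≤ q w := by
      intro w
      have h1 := (Complex.le_def.mp (hC.dotProduct_mulVec_nonneg w)).1
      simpa [hq] using h1
    have hn2nn : ∀ w, 0 ≤ n2 w := by
      intro w; simp only [hn2]; positivity
    have hdotself : ∀ y : Fin K → ℂ, (star y ⬝ᵥ y).re = n2 y := by
      intro y; rw [dot_self_eq, Complex.ofReal_re]
    have gexp : ∀ (w : Fin K → ℂ) (s : ℝ),
        g (x₀ + (s : ℂ) • w) = g x₀ + 2 * s * r w + s ^ 2 * q w := by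
      intro w s
      simp only [hg, hr, hq, hu]
      rw [← add_assoc, expand_re C hC.1 (h + x₀) ((s : ℂ) • w)]
      simp only [lin_smul_re, mulVec_smul, dotProduct_smul, smul_eq_mul,
        Complex.re_ofReal_mul]
      ring
    have n2exp : ∀ (w : Fin K → ℂ) (s : ℝ),
        n2 (x₀ + (s : ℂ) • w) = n2 x₀ + 2 * s * p w + s ^ 2 * n2 w := by
      intro w s
      have e := expand_re 1 Matrix.isHermitian_one x₀ ((s : ℂ) • w)
      simp only [Matrix.one_mulVec] at e
      rw [← hdotself (x₀ + (s : ℂ) • w), e, hdotself x₀]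
      simp only [lin_smul_re, dotProduct_smul, smul_eq_mul, Complex.re_ofReal_mul, hp]
      rw [hdotself w]
      ring
    have gexp1 : ∀ y, g (x₀ + y) = g x₀ + 2 * r y + q y := by
      intro y
      have h1 := gexp y 1
      simpa using h1
    have n2exp1 : ∀ y, n2 (x₀ + y) = n2 x₀ + 2 * p y + n2 y := by
      intro y
      have h1 := n2exp y 1
      simpa using h1
    have ht0 : t ≤ g x₀ := H' x₀ hx₀S
    have hx₀n2 : n2 x₀ ≤ ε ^ 2 := hx₀S
    have hdir : ∀ (w : Fin K → ℂ) (s : ℝ), n2 (x₀ + (s : ℂ) • w) ≤ ε ^ 2 →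
        0 ≤ 2 * s * r w + s ^ 2 * q w := by
      intro w s hmem
      have h1 : g x₀ ≤ g (x₀ + (s : ℂ) • w) := isMinOn_iff.mp hmin _ hmem
      rw [gexp w s] at h1
      linarith
    by_cases hcase : n2 x₀ < ε ^ 2
    · -- interior minimizer : μ = 0 works
      have rzero : ∀ w, r w = 0 := by
        intro w
        have hA0 : 0 < ε ^ 2 - n2 x₀ := by linarith
        have hden : 0 < 2 * |p w| + n2 w + 1 := by
          have := hn2nn w; have := abs_nonneg (p w); linarith
        set δ := min 1 ((ε ^ 2 - n2 x₀) / (2 * |p w| + n2 w + 1)) with hδdef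
        have hδ0 : 0 < δ := lt_min one_pos (div_pos hA0 hden)
        have hmem : ∀ s : ℝ, |s| ≤ δ → n2 (x₀ + (s : ℂ) • w) ≤ ε ^ 2 := by
          intro s hs
          rw [n2exp]
          have h1 : |s| ≤ 1 := le_trans hs (min_le_left _ _)
          have h2 : |s| ≤ (ε ^ 2 - n2 x₀) / (2 * |p w| + n2 w + 1) :=
            le_trans hs (min_le_right _ _)
          have h3 : 2 * s * p w ≤ 2 * (|s| * |p w|) := by
            have e1 := le_abs_self (s * p w)
            have e2 := abs_mul s (p w)
            nlinarith
          have h4 : s ^ 2 * n2 w ≤ |s| * n2 w := by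
            have h5 : s ^ 2 ≤ |s| := by nlinarith [_root_.sq_abs s, abs_nonneg s]
            exact mul_le_mul_of_nonneg_right h5 (hn2nn w)
          have h6 : |s| * (2 * |p w| + n2 w + 1) ≤ ε ^ 2 - n2 x₀ :=
            (le_div_iff₀ hden).mp h2
          nlinarith [abs_nonneg s]
        have hper : ∀ s : ℝ, 0 < s → s ≤ δ → 0 ≤ 2 * s * r w + s ^ 2 * q w := by
          intro s hs1 hs2
          exact hdir w s (hmem s (by rw [abs_of_pos hs1]; exact hs2))
        have hner : ∀ s : ℝ, 0 < s → s ≤ δ → 0 ≤ 2 * s * (-(r w)) + s ^ 2 * q w := by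
          intro s hs1 hs2
          have h1 := hdir w (-s) (hmem (-s) (by rw [abs_neg, abs_of_pos hs1]; exact hs2))
          nlinarith
        have h6 := aux0 _ _ δ (hqnn w) hδ0 hper
        have h7 := aux0 _ _ δ (hqnn w) hδ0 hner
        linarith
      refine ⟨0, le_refl 0, (lmi_iff C hC h ε t 0 (le_refl 0)).2 ?_⟩
      intro x
      show t + 0 * ε ^ 2 ≤ g x + 0 * n2 x
      have hxx : x₀ + (x - x₀) = x := by abel
      have e1 := gexp1 (x - x₀)
      rw [hxx] at e1
      have h6 := hqnn (x - x₀)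
      rw [rzero (x - x₀)] at e1
      linarith
    · -- boundary minimizer
      have heq : n2 x₀ = ε ^ 2 := le_antisymm hx₀n2 (not_lt.mp hcase)
      have hε2 : (0:ℝ) < ε ^ 2 := pow_pos hε 2
      have hpx₀ : p x₀ = ε ^ 2 := by
        simp only [hp]
        rw [hdotself x₀, heq]
      have claim1 : ∀ w, p w < 0 → 0 ≤ r w := by
        intro w hpw
        have hden : 0 < n2 w + 1 := by have := hn2nn w; linarith
        have hδ0 : 0 < (-2 * p w) / (n2 w + 1) := div_pos (by linarith) hden
        apply aux0 _ (q w) _ (hqnn w) hδ0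
        intro s hs1 hs2
        apply hdir
        rw [n2exp, heq]
        have h2 : s * (n2 w + 1) ≤ -2 * p w := (le_div_iff₀ hden).mp hs2
        nlinarith [mul_le_mul_of_nonneg_left h2 hs1.le, sq_nonneg s, hn2nn w]
      have claim2 : r x₀ ≤ 0 := by
        have h1 : p (-x₀) < 0 := by
          have e1 : p (-x₀) = -(p x₀) := lin_neg_re x₀ x₀
          rw [e1, hpx₀]; linarith
        have h2 := claim1 _ h1
        have h3 : r (-x₀) = -(r x₀) := lin_neg_re x₀ u
        linarith
      have claim3 : ∀ w, p w ≤ 0 → 0 ≤ r w := by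
        intro w hpw
        apply aux_dless (r w) (r x₀)
        intro δ hδ
        have h1 : p (w + ((-δ : ℝ) : ℂ) • x₀) < 0 := by
          have e1 : p (w + ((-δ : ℝ) : ℂ) • x₀) = p w + (-δ) * p x₀ := by
            simp only [hp]
            rw [lin_add_re, lin_smul_re]
          rw [e1, hpx₀]
          nlinarith
        have h2 := claim1 _ h1
        have h3 : r (w + ((-δ : ℝ) : ℂ) • x₀) = r w + (-δ) * r x₀ := by
          simp only [hr]
          rw [lin_add_re, lin_smul_re]
        rw [h3] at h2
        linarith
      have claim4 : ∀ w, p w = 0 → r w = 0 := by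
        intro w hpw
        have h1 := claim3 w (le_of_eq hpw)
        have h2 : p (-w) = 0 := by
          have e1 : p (-w) = -(p w) := lin_neg_re w x₀
          rw [e1, hpw, neg_zero]
        have h3 := claim3 (-w) (le_of_eq h2)
        have h4 : r (-w) = -(r w) := lin_neg_re w u
        linarith
      set μ := -(r x₀) / ε ^ 2 with hμdef
      have hμ0 : 0 ≤ μ := div_nonneg (by linarith) (by positivity)
      have claim5 : ∀ y, r y + μ * p y = 0 := by
        intro y
        have h1 : p (y + ((-(p y / ε ^ 2) : ℝ) : ℂ) • x₀) = 0 := by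
          have e1 : p (y + ((-(p y / ε ^ 2) : ℝ) : ℂ) • x₀)
              = p y + (-(p y / ε ^ 2)) * p x₀ := by
            simp only [hp]
            rw [lin_add_re, lin_smul_re]
          rw [e1, hpx₀]
          field_simp
          ring
        have h2 := claim4 _ h1
        have h3 : r (y + ((-(p y / ε ^ 2) : ℝ) : ℂ) • x₀)
            = r y + (-(p y / ε ^ 2)) * r x₀ := by
          simp only [hr]
          rw [lin_add_re, lin_smul_re]
        rw [h3] at h2
        have h4 : μ * p y = (-(p y / ε ^ 2)) * r x₀ := by
          rw [hμdef]
          field_simp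
        linarith
      refine ⟨μ, hμ0, (lmi_iff C hC h ε t μ hμ0).2 ?_⟩
      intro x
      show t + μ * ε ^ 2 ≤ g x + μ * n2 x
      have hxx : x₀ + (x - x₀) = x := by abel
      have e1 := gexp1 (x - x₀)
      have e2 := n2exp1 (x - x₀)
      rw [hxx] at e1 e2
      have h5 := claim5 (x - x₀)
      have h6 := hqnn (x - x₀)
      have h7 := hn2nn (x - x₀)
      have h8 : μ * p (x - x₀) = -(r (x - x₀)) := by linarith
      have h9 : μ * n2 x = μ * n2 x₀ + 2 * (μ * p (x - x₀)) + μ * n2 (x - x₀) := by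
        rw [e2]; ring
      have h10 : 0 ≤ μ * n2 (x - x₀) := mul_nonneg hμ0 h7
      rw [heq] at h9
      linarith
  · rintro ⟨μ, hμ0, hT⟩ η hη
    have h1 := (lmi_iff C hC h ε t μ hμ0).1 hT η
    have h2 : (∑ i, ‖η i‖ ^ 2) ≤ ε ^ 2 := (Real.sqrt_le_iff.mp hη).2
    have h3 : μ * (∑ i, ‖η i‖ ^ 2) ≤ μ * ε ^ 2 := mul_le_mul_of_nonneg_left h2 hμ0
    linarith
end

section
/- Let K ≥ 1, let C be a K×K Hermitian positive semidefinite complex matrix, t ∈ ℝ, and let I be a finite index set with channel estimates h_i ∈ ℂ^K and error bounds ε_i > 0 for each i ∈ I. Then the following are equivalent: (i) for every i ∈ I and every η ∈ ℂ^K with ‖η‖ ≤ ε_i, (h_i + η)† C (h_i + η) ≥ t; (ii) there exists a family of reals μ_i ≥ 0 (i ∈ I) such that for every i ∈ I the Hermitian block matrix T_i = fromBlocks( μ_i·I_K + C , C h_i , (C h_i)† , h_i† C h_i − t − μ_i·ε_i² ) is positive semidefinite. Consequently the semidefinite program (6) of the paper has the same feasible pairs (C, t) as the original robust max-min problem (2).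 -/
open Matrix Complex ComplexOrder

variable {K : ℕ}

lemma starDot_self_eq (v : Fin K → ℂ) :
    star v ⬝ᵥ v = ((∑ j, ‖v j‖ ^ 2 : ℝ) : ℂ) := by
  simp only [dotProduct, Pi.star_apply, Complex.star_def]
  push_cast
  refine Finset.sum_congr rfl fun j _ => ?_
  rw [mul_comm, Complex.mul_conj, Complex.normSq_eq_norm_sq]
  push_cast; ring

lemma herm_swap {C : Matrix (Fin K) (Fin K) ℂ} (hC : C.IsHermitian)
    (h η : Fin K → ℂ) : star (C *ᵥ h) ⬝ᵥ η = star h ⬝ᵥ (C *ᵥ η) := by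
  rw [star_mulVec, ← dotProduct_mulVec, hC.eq]

lemma herm_quad_real {n : Type*} [Fintype n] {M : Matrix n n ℂ} (hM : M.IsHermitian)
    (x : n → ℂ) : (star x ⬝ᵥ (M *ᵥ x)).im = 0 := by
  rw [← Complex.conj_eq_iff_im]
  calc (starRingEnd ℂ) (star x ⬝ᵥ (M *ᵥ x))
      = star (star x ⬝ᵥ (M *ᵥ x)) := rfl
    _ = star (M *ᵥ x) ⬝ᵥ x := by rw [star_dotProduct, star_star]
    _ = star x ⬝ᵥ (M *ᵥ x) := by rw [star_mulVec, ← dotProduct_mulVec, hM.eq]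

lemma posSemidef_of_re {n : Type*} [Fintype n] {M : Matrix n n ℂ} (hM : M.IsHermitian)
    (h : ∀ x : n → ℂ, 0 ≤ (star x ⬝ᵥ (M *ᵥ x)).re) : M.PosSemidef :=
  PosSemidef.of_dotProduct_mulVec_nonneg hM fun x => Complex.nonneg_iff.2 ⟨h x, (herm_quad_real hM x).symm⟩

lemma col_mulVec_const (w : Fin K → ℂ) (c : ℂ) :
    (replicateCol (Fin 1) w) *ᵥ (fun _ => c) = c • w := by
  ext i; simp [mulVec, dotProduct, replicateCol, mul_comm]

lemma row_mulVec_eq (w η : Fin K → ℂ) :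
    (replicateRow (Fin 1) w) *ᵥ η = fun _ => w ⬝ᵥ η := by
  ext i; simp [mulVec, dotProduct, replicateRow]

lemma of_one_mulVec (d c : ℂ) :
    (of fun _ _ : Fin 1 => d) *ᵥ (fun _ => c) = fun _ => d * c := by
  ext i; simp [mulVec, dotProduct]

lemma dot_fin1 (a b : Fin 1 → ℂ) : a ⬝ᵥ b = a 0 * b 0 := by
  simp [dotProduct]

lemma quad_expand (μ t ε : ℝ) {C : Matrix (Fin K) (Fin K) ℂ} (hC : C.IsHermitian)
    (h η : Fin K → ℂ) (c : ℂ) :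
    star (Sum.elim η (fun _ : Fin 1 => c)) ⬝ᵥ
      ((fromBlocks ((μ:ℂ) • (1 : Matrix (Fin K) (Fin K) ℂ) + C) (replicateCol (Fin 1) (C *ᵥ h))
        (replicateRow (Fin 1) (star (C *ᵥ h)))
        (of fun _ _ : Fin 1 => star h ⬝ᵥ (C *ᵥ h) - (t:ℂ) - ((μ * ε^2 : ℝ):ℂ))) *ᵥ
        Sum.elim η (fun _ => c)) =
      star (c • h + η) ⬝ᵥ (C *ᵥ (c • h + η)) + (μ:ℂ) * (star η ⬝ᵥ η)
        - (star c * c) * ((t:ℂ) + ((μ * ε^2 : ℝ):ℂ)) := by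
  rw [fromBlocks_mulVec, Function.star_sumElim, sumElim_dotProduct_sumElim]
  simp only [Sum.elim_comp_inl, Sum.elim_comp_inr]
  rw [col_mulVec_const, row_mulVec_eq, of_one_mulVec]
  have hstar : star (fun _ : Fin 1 => c) = fun _ : Fin 1 => star c := rfl
  rw [hstar]
  rw [dot_fin1]
  simp only [Pi.add_apply]
  rw [herm_swap hC h η]
  simp only [mulVec_add, mulVec_smul, add_mulVec, smul_mulVec, one_mulVec,
    star_add, star_smul, add_dotProduct, smul_dotProduct, dotProduct_add,
    dotProduct_smul, smul_eq_mul, Complex.star_def]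
  ring

lemma herm_swap' {n : Type*} [Fintype n] {M : Matrix n n ℂ} (hM : M.IsHermitian)
    (a b : n → ℂ) : star a ⬝ᵥ (M *ᵥ b) = star (M *ᵥ a) ⬝ᵥ b := by
  rw [star_mulVec, ← dotProduct_mulVec, hM.eq]

lemma convex_identity {C : Matrix (Fin K) (Fin K) ℂ} (hC : C.IsHermitian) (μ : ℝ)
    (h p η : Fin K → ℂ)
    (hp : ((μ:ℂ) • (1 : Matrix (Fin K) (Fin K) ℂ) + C) *ᵥ p = -(C *ᵥ h)) :
    star (h + η) ⬝ᵥ (C *ᵥ (h + η)) + (μ:ℂ) * (star η ⬝ᵥ η) =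
      star (h + p) ⬝ᵥ (C *ᵥ (h + p)) + (μ:ℂ) * (star p ⬝ᵥ p)
        + star (η - p) ⬝ᵥ ((((μ:ℂ) • (1 : Matrix (Fin K) (Fin K) ℂ) + C)) *ᵥ (η - p)) := by
  rw [add_mulVec, smul_mulVec, one_mulVec] at hp
  have hw : C *ᵥ h = -((μ:ℂ) • p) - C *ᵥ p := by
    have h2 := neg_eq_iff_eq_neg.mp hp.symm
    rw [h2, neg_add, sub_eq_add_neg]
  have Tswap : ∀ y : Fin K → ℂ, star h ⬝ᵥ (C *ᵥ y)
      = -((μ:ℂ) * (star p ⬝ᵥ y)) - star p ⬝ᵥ (C *ᵥ y) := by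
    intro y
    rw [herm_swap' hC h y, hw]
    simp only [star_sub, star_neg, star_smul, Complex.star_def, Complex.conj_ofReal,
      sub_dotProduct, neg_dotProduct, smul_dotProduct, smul_eq_mul]
    rw [herm_swap' hC p y]
  simp only [mulVec_add, mulVec_sub, add_mulVec, smul_mulVec, one_mulVec,
    dotProduct_add, dotProduct_sub, add_dotProduct, sub_dotProduct, star_add, star_sub,
    dotProduct_smul, smul_dotProduct, smul_eq_mul, hw, Tswap, dotProduct_neg, neg_dotProduct,
    star_neg, star_smul, Complex.star_def, Complex.conj_ofReal]
  ring

lemma Amu_herm {C : Matrix (Fin K) (Fin K) ℂ} (hC : C.IsHermitian) (μ : ℝ) :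
    ((μ:ℂ) • (1 : Matrix (Fin K) (Fin K) ℂ) + C).IsHermitian := by
  apply IsHermitian.add ?_ hC
  rw [IsHermitian, conjTranspose_smul, conjTranspose_one, Complex.star_def,
    Complex.conj_ofReal]

lemma Amu_posSemidef {C : Matrix (Fin K) (Fin K) ℂ} (hC : C.PosSemidef) {μ : ℝ}
    (hμ : 0 ≤ μ) : ((μ:ℂ) • (1 : Matrix (Fin K) (Fin K) ℂ) + C).PosSemidef := by
  apply Matrix.PosSemidef.add ?_ hC
  rw [smul_one_eq_diagonal]
  exact Matrix.posSemidef_diagonal_iff.2 fun i => by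
    rw [Complex.nonneg_iff]; simp [hμ]

lemma Amu_posDef {C : Matrix (Fin K) (Fin K) ℂ} (hC : C.PosSemidef) {μ : ℝ}
    (hμ : 0 < μ) : ((μ:ℂ) • (1 : Matrix (Fin K) (Fin K) ℂ) + C).PosDef := by
  apply Matrix.PosDef.add_posSemidef ?_ hC
  rw [smul_one_eq_diagonal]
  exact Matrix.posDef_diagonal_iff.2 fun i =>
    by exact_mod_cast hμ

lemma T_herm {C : Matrix (Fin K) (Fin K) ℂ} (hC : C.IsHermitian) (μ t ε : ℝ)
    (h : Fin K → ℂ) :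
    (Matrix.fromBlocks
      ((μ:ℂ) • (1 : Matrix (Fin K) (Fin K) ℂ) + C)
      (Matrix.replicateCol (Fin 1) (C *ᵥ h))
      (Matrix.replicateRow (Fin 1) (star (C *ᵥ h)))
      (Matrix.of fun _ _ : Fin 1 =>
        star h ⬝ᵥ (C *ᵥ h) - (t : ℂ) - ((μ * ε ^ 2 : ℝ) : ℂ))).IsHermitian := by
  rw [isHermitian_fromBlocks_iff]
  refine ⟨Amu_herm hC μ, ?_, ?_, ?_⟩
  · rw [conjTranspose_replicateCol]
  · rw [conjTranspose_replicateRow, star_star]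
  · ext i j
    fin_cases i; fin_cases j
    simp only [conjTranspose_apply, of_apply, star_sub, Complex.star_def,
      Complex.conj_ofReal]
    rw [Complex.conj_eq_iff_im.2 (herm_quad_real hC h)]

lemma dquad_real {C : Matrix (Fin K) (Fin K) ℂ} (hC : C.IsHermitian) (v : Fin K → ℂ) :
    ((star v ⬝ᵥ (C *ᵥ v)).re : ℂ) = star v ⬝ᵥ (C *ᵥ v) :=
  Complex.conj_eq_iff_re.mp (Complex.conj_eq_iff_im.mpr (herm_quad_real hC v))

lemma scalar_to_psd {C : Matrix (Fin K) (Fin K) ℂ} (hC : C.PosSemidef) (μ t ε : ℝ)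
    (hμ : 0 ≤ μ) (h : Fin K → ℂ)
    (hs : ∀ η : Fin K → ℂ,
      t + μ * ε ^ 2 ≤ (star (h + η) ⬝ᵥ (C *ᵥ (h + η))).re + μ * ∑ j, ‖η j‖ ^ 2) :
    (Matrix.fromBlocks
      ((μ:ℂ) • (1 : Matrix (Fin K) (Fin K) ℂ) + C)
      (Matrix.replicateCol (Fin 1) (C *ᵥ h))
      (Matrix.replicateRow (Fin 1) (star (C *ᵥ h)))
      (Matrix.of fun _ _ : Fin 1 =>
        star h ⬝ᵥ (C *ᵥ h) - (t : ℂ) - ((μ * ε ^ 2 : ℝ) : ℂ))).PosSemidef := by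
  apply posSemidef_of_re (T_herm hC.1 μ t ε h)
  intro x
  set η := x ∘ Sum.inl with hη
  set c := x (Sum.inr 0) with hcdef
  have hx : x = Sum.elim η (fun _ : Fin 1 => c) := by
    funext j
    cases j with
    | inl a => rfl
    | inr b =>
      have hb : b = 0 := Subsingleton.elim _ _
      rw [hb]; rfl
  rw [hx, quad_expand μ t ε hC.1 h η c]
  have hcc : (star c) * c = ((‖c‖ ^ 2 : ℝ) : ℂ) := by
    rw [Complex.star_def, mul_comm, Complex.mul_conj, Complex.normSq_eq_norm_sq]
  by_cases hc : c = 0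
  · simp only [hc, zero_smul, zero_add, star_zero, zero_mul, mul_zero, sub_zero]
    rw [starDot_self_eq η, ← dquad_real hC.1 η]
    have hrw : ((((star η ⬝ᵥ (C *ᵥ η)).re : ℝ) : ℂ) + (μ : ℂ) * ((∑ j, ‖η j‖ ^ 2 : ℝ) : ℂ))
        = (((star η ⬝ᵥ (C *ᵥ η)).re + μ * ∑ j, ‖η j‖ ^ 2 : ℝ) : ℂ) := by
      push_cast; ring
    rw [hrw, Complex.ofReal_re]
    have h1 := (Complex.nonneg_iff.mp (hC.dotProduct_mulVec_nonneg η)).1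
    have h2 : (0:ℝ) ≤ ∑ j, ‖η j‖ ^ 2 := Finset.sum_nonneg fun j _ => by positivity
    nlinarith
  · set η' := c⁻¹ • η with hη'
    have hcs : c • η' = η := smul_inv_smul₀ hc η
    have hv : c • h + η = c • (h + η') := by rw [smul_add, hcs]
    have key : star (c • (h + η')) ⬝ᵥ (C *ᵥ (c • (h + η')))
        = ((‖c‖ ^ 2 : ℝ) : ℂ) * (star (h + η') ⬝ᵥ (C *ᵥ (h + η'))) := by
      rw [star_smul, smul_dotProduct, mulVec_smul, dotProduct_smul, smul_eq_mul,
        smul_eq_mul, ← mul_assoc, hcc]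
    have hnη : (∑ j, ‖η j‖ ^ 2) = ‖c‖ ^ 2 * ∑ j, ‖η' j‖ ^ 2 := by
      rw [Finset.mul_sum]
      refine Finset.sum_congr rfl fun j _ => ?_
      have : η j = c * η' j := by rw [← hcs]; rfl
      rw [this, norm_mul, mul_pow]
    rw [hv, key, starDot_self_eq η, ← dquad_real hC.1 (h + η'), hnη, hcc]
    have hre : (((‖c‖ ^ 2 : ℝ) : ℂ) * (((star (h + η') ⬝ᵥ (C *ᵥ (h + η'))).re : ℝ) : ℂ)
        + (μ : ℂ) * ((‖c‖ ^ 2 * ∑ j, ‖η' j‖ ^ 2 : ℝ) : ℂ)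
        - ((‖c‖ ^ 2 : ℝ) : ℂ) * ((t : ℂ) + ((μ * ε ^ 2 : ℝ) : ℂ)))
        = ((‖c‖ ^ 2 * ((star (h + η') ⬝ᵥ (C *ᵥ (h + η'))).re
            + μ * ∑ j, ‖η' j‖ ^ 2 - (t + μ * ε ^ 2)) : ℝ) : ℂ) := by
      push_cast; ring
    rw [hre, Complex.ofReal_re]
    have := hs η'
    have hc2 : (0:ℝ) ≤ ‖c‖ ^ 2 := by positivity
    nlinarith

lemma psd_to_robust {C : Matrix (Fin K) (Fin K) ℂ} (hC : C.PosSemidef) (μ t ε : ℝ)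
    (hμ : 0 ≤ μ) (h : Fin K → ℂ)
    (hT : (Matrix.fromBlocks
      ((μ:ℂ) • (1 : Matrix (Fin K) (Fin K) ℂ) + C)
      (Matrix.replicateCol (Fin 1) (C *ᵥ h))
      (Matrix.replicateRow (Fin 1) (star (C *ᵥ h)))
      (Matrix.of fun _ _ : Fin 1 =>
        star h ⬝ᵥ (C *ᵥ h) - (t : ℂ) - ((μ * ε ^ 2 : ℝ) : ℂ))).PosSemidef) :
    ∀ η : Fin K → ℂ, Real.sqrt (∑ j, ‖η j‖ ^ 2) ≤ ε →
      t ≤ (star (h + η) ⬝ᵥ (C *ᵥ (h + η))).re := by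
  intro η hηε
  have h0 := hT.dotProduct_mulVec_nonneg (Sum.elim η (fun _ : Fin 1 => 1))
  rw [quad_expand μ t ε hC.1 h η 1] at h0
  rw [one_smul, star_one, one_mul, one_mul] at h0
  rw [starDot_self_eq η, ← dquad_real hC.1 (h + η)] at h0
  have hrw : ((((star (h + η) ⬝ᵥ (C *ᵥ (h + η))).re : ℝ) : ℂ)
      + (μ : ℂ) * ((∑ j, ‖η j‖ ^ 2 : ℝ) : ℂ)
      - ((t : ℂ) + ((μ * ε ^ 2 : ℝ) : ℂ)))
      = (((star (h + η) ⬝ᵥ (C *ᵥ (h + η))).re + μ * ∑ j, ‖η j‖ ^ 2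
          - (t + μ * ε ^ 2) : ℝ) : ℂ) := by
    push_cast; ring
  rw [hrw] at h0
  have h1 := (Complex.nonneg_iff.mp h0).1
  rw [Complex.ofReal_re] at h1
  have h2 : (0:ℝ) ≤ ∑ j, ‖η j‖ ^ 2 := Finset.sum_nonneg fun j _ => by positivity
  have hn : ∑ j, ‖η j‖ ^ 2 ≤ ε ^ 2 := by
    have := pow_le_pow_left₀ (Real.sqrt_nonneg _) hηε 2
    rwa [Real.sq_sqrt h2] at this
  nlinarith

lemma cs_re (v w : Fin K → ℂ) :
    (star v ⬝ᵥ w).re ≤ Real.sqrt (∑ j, ‖v j‖ ^ 2) * Real.sqrt (∑ j, ‖w j‖ ^ 2) := by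
  have h1 : star v ⬝ᵥ w
      = (inner ℂ (WithLp.toLp 2 v) (WithLp.toLp 2 w) : ℂ) := by
    rw [EuclideanSpace.inner_toLp_toLp, dotProduct_comm]
  have h2 := norm_inner_le_norm (𝕜 := ℂ)
    (WithLp.toLp 2 v) (WithLp.toLp 2 w)
  have h3 : ‖WithLp.toLp 2 v‖ = Real.sqrt (∑ j, ‖v j‖ ^ 2) := by
    rw [EuclideanSpace.norm_eq]
  have h4 : ‖WithLp.toLp 2 w‖ = Real.sqrt (∑ j, ‖w j‖ ^ 2) := by
    rw [EuclideanSpace.norm_eq]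
  calc (star v ⬝ᵥ w).re ≤ ‖star v ⬝ᵥ w‖ := Complex.re_le_norm _
    _ ≤ _ := by rw [h1, ← h3, ← h4]; exact h2

lemma convex_re {C : Matrix (Fin K) (Fin K) ℂ} (hC : C.PosSemidef) {μ : ℝ} (hμ : 0 < μ)
    (h p η : Fin K → ℂ)
    (hp : ((μ:ℂ) • (1 : Matrix (Fin K) (Fin K) ℂ) + C) *ᵥ p = -(C *ᵥ h)) :
    (star (h + p) ⬝ᵥ (C *ᵥ (h + p))).re + μ * ∑ j, ‖p j‖ ^ 2
      ≤ (star (h + η) ⬝ᵥ (C *ᵥ (h + η))).re + μ * ∑ j, ‖η j‖ ^ 2 := by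
  have hid := convex_identity hC.1 μ h p η hp
  rw [starDot_self_eq η, starDot_self_eq p, ← Complex.ofReal_mul, ← Complex.ofReal_mul]
    at hid
  have hre := congrArg Complex.re hid
  rw [Complex.add_re, Complex.add_re, Complex.add_re, Complex.ofReal_re, Complex.ofReal_re]
    at hre
  have hQ := (Complex.nonneg_iff.mp
    ((Amu_posDef hC hμ).posSemidef.dotProduct_mulVec_nonneg (η - p))).1
  linarith

lemma forward_scalar {C : Matrix (Fin K) (Fin K) ℂ} (hC : C.PosSemidef) {t ε : ℝ}
    (hε : 0 < ε) (h : Fin K → ℂ)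
    (hr : ∀ η : Fin K → ℂ, Real.sqrt (∑ j, ‖η j‖ ^ 2) ≤ ε →
      t ≤ (star (h + η) ⬝ᵥ (C *ᵥ (h + η))).re) :
    ∃ μ : ℝ, 0 ≤ μ ∧ ∀ η : Fin K → ℂ,
      t + μ * ε ^ 2 ≤ (star (h + η) ⬝ᵥ (C *ᵥ (h + η))).re + μ * ∑ j, ‖η j‖ ^ 2 := by
  set w : Fin K → ℂ := C *ᵥ h with hw
  set A : ℝ → Matrix (Fin K) (Fin K) ℂ :=
    fun μ => (μ:ℂ) • (1 : Matrix (Fin K) (Fin K) ℂ) + C with hA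
  set p : ℝ → (Fin K → ℂ) := fun μ => (A μ)⁻¹ *ᵥ (-w) with hp
  set G : ℝ → ℝ := fun μ => ∑ j, ‖p μ j‖ ^ 2 with hG
  have hApd : ∀ {μ : ℝ}, 0 < μ → (A μ).PosDef := fun hμ => Amu_posDef hC hμ
  have hpA : ∀ {μ : ℝ}, 0 < μ → A μ *ᵥ p μ = -w := by
    intro μ hμ
    rw [hp, mulVec_mulVec, Matrix.mul_nonsing_inv _
      ((Matrix.isUnit_iff_isUnit_det _).1 (hApd hμ).isUnit), one_mulVec]
  have hGnonneg : ∀ μ : ℝ, 0 ≤ G μ := fun μ => Finset.sum_nonneg fun j _ => by positivity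
  -- the key convexity consequence
  have hkey : ∀ {μ : ℝ}, 0 < μ → ∀ η : Fin K → ℂ,
      (star (h + p μ) ⬝ᵥ (C *ᵥ (h + p μ))).re + μ * G μ
        ≤ (star (h + η) ⬝ᵥ (C *ᵥ (h + η))).re + μ * ∑ j, ‖η j‖ ^ 2 := by
    intro μ hμ η
    exact convex_re hC hμ h (p μ) η (hpA hμ)
  -- feasibility of p μ when G μ ≤ ε ^ 2
  have hfeas : ∀ {μ : ℝ}, 0 < μ → G μ ≤ ε ^ 2 →
      t ≤ (star (h + p μ) ⬝ᵥ (C *ᵥ (h + p μ))).re := by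
    intro μ hμ hGμ
    apply hr
    calc Real.sqrt (G μ) ≤ Real.sqrt (ε ^ 2) := Real.sqrt_le_sqrt hGμ
      _ = ε := Real.sqrt_sq hε.le
  -- bound for large μ
  set W : ℝ := Real.sqrt (∑ j, ‖w j‖ ^ 2) with hW
  have hWnonneg : 0 ≤ W := Real.sqrt_nonneg _
  have hbig : ∀ {μ : ℝ}, 0 < μ → μ * Real.sqrt (G μ) ≤ W := by
    intro μ hμ
    have h1 : (star (p μ) ⬝ᵥ (A μ *ᵥ p μ)).re = (star (p μ) ⬝ᵥ (-w)).re := by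
      rw [hpA hμ]
    have h2 : (star (p μ) ⬝ᵥ (A μ *ᵥ p μ)).re
        = μ * G μ + (star (p μ) ⬝ᵥ (C *ᵥ p μ)).re := by
      rw [hA]
      rw [add_mulVec, smul_mulVec, one_mulVec, dotProduct_add, dotProduct_smul]
      rw [starDot_self_eq (p μ), Complex.add_re, smul_eq_mul, ← Complex.ofReal_mul,
        Complex.ofReal_re]
    have h3 : (star (p μ) ⬝ᵥ (-w)).re ≤ Real.sqrt (G μ) * W := by
      have := cs_re (p μ) (-w)
      have hsum : (∑ j, ‖(-w) j‖ ^ 2) = ∑ j, ‖w j‖ ^ 2 := by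
        refine Finset.sum_congr rfl fun j _ => by simp
      rw [hsum] at this
      exact this
    have h4 : 0 ≤ (star (p μ) ⬝ᵥ (C *ᵥ p μ)).re := (Complex.nonneg_iff.mp (hC.dotProduct_mulVec_nonneg (p μ))).1
    have h5 : μ * G μ ≤ Real.sqrt (G μ) * W := by linarith
    have h6 : G μ = Real.sqrt (G μ) * Real.sqrt (G μ) :=
      (Real.mul_self_sqrt (hGnonneg μ)).symm
    rcases eq_or_lt_of_le (Real.sqrt_nonneg (G μ)) with hz | hz
    · rw [← hz]; simpa using hWnonneg
    · have h6' : Real.sqrt (G μ) * Real.sqrt (G μ) = G μ := Real.mul_self_sqrt (hGnonneg μ)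
      nlinarith [h5, h6', hz]
  -- continuity of G on (0, ∞)
  have hGcont : ContinuousOn G (Set.Ioi (0:ℝ)) := by
    have hAcont : Continuous A := by
      apply Continuous.add ?_ continuous_const
      exact (Complex.continuous_ofReal).smul continuous_const
    have hdet : Continuous fun μ => (A μ).det := hAcont.matrix_det
    have hadj : Continuous fun μ => (A μ).adjugate := hAcont.matrix_adjugate
    have hdetne : ∀ μ ∈ Set.Ioi (0:ℝ), (A μ).det ≠ 0 := fun μ hμ => (hApd hμ).det_pos.ne'
    have hinv : ContinuousOn (fun μ => ((A μ).det)⁻¹) (Set.Ioi (0:ℝ)) :=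
      ContinuousOn.inv₀ hdet.continuousOn hdetne
    have hpcomp : ∀ j, ContinuousOn (fun μ => p μ j) (Set.Ioi (0:ℝ)) := by
      intro j
      have hrepr : ∀ μ : ℝ, p μ j = ((A μ).det)⁻¹ * ((A μ).adjugate *ᵥ (-w)) j := by
        intro μ
        rw [show p μ = (A μ)⁻¹ *ᵥ (-w) from rfl, Matrix.inv_def, Ring.inverse_eq_inv,
          smul_mulVec]
        rfl
      simp only [hrepr]
      have hmv : Continuous fun μ => ((A μ).adjugate *ᵥ (-w)) j :=
        (continuous_apply j).comp (hadj.matrix_mulVec continuous_const)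
      exact hinv.mul hmv.continuousOn
    apply continuousOn_finset_sum
    intro j _
    exact ((hpcomp j).norm.pow 2)
  by_cases hcase : ∀ μ' ∈ Set.Ioi (0:ℝ), G μ' < ε ^ 2
  · refine ⟨0, le_refl 0, fun η => ?_⟩
    rw [zero_mul, zero_mul, add_zero, add_zero]
    by_contra hlt
    push_neg at hlt
    set n : ℝ := ∑ j, ‖η j‖ ^ 2 with hn
    have hn0 : 0 ≤ n := Finset.sum_nonneg fun j _ => by positivity
    set δ : ℝ := t - (star (h + η) ⬝ᵥ (C *ᵥ (h + η))).re with hδ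
    have hδpos : 0 < δ := sub_pos.mpr hlt
    set μ0 : ℝ := δ / (n + 1) with hμ0
    have hμ0pos : 0 < μ0 := div_pos hδpos (by linarith)
    have hkey2 := hkey hμ0pos η
    have hfeas2 : t ≤ (star (h + p μ0) ⬝ᵥ (C *ᵥ (h + p μ0))).re :=
      hfeas hμ0pos (le_of_lt (hcase μ0 hμ0pos))
    have hGn := hGnonneg μ0
    have hup : t ≤ (star (h + η) ⬝ᵥ (C *ᵥ (h + η))).re + μ0 * n := by nlinarith
    have hident : μ0 * (n + 1) = δ := by
      rw [hμ0]; field_simp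
    nlinarith
  · push_neg at hcase
    obtain ⟨μ0, hμ0mem, hμ0⟩ := hcase
    have hμ0pos : 0 < μ0 := hμ0mem
    set μ1 : ℝ := max (W / ε + 1) (μ0 + 1) with hμ1
    have hWε : 0 ≤ W / ε := div_nonneg hWnonneg hε.le
    have hμ1pos : 0 < μ1 := lt_of_lt_of_le (by linarith) (le_max_left _ _)
    have hμ0le : μ0 ≤ μ1 := le_trans (by linarith) (le_max_right _ _)
    have hGμ1 : G μ1 < ε ^ 2 := by
      have hb := hbig hμ1pos
      have hμ1gt : W / ε < μ1 := lt_of_lt_of_le (by linarith) (le_max_left _ _)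
      have hWlt : W < μ1 * ε := by
        have := (div_lt_iff₀ hε).mp hμ1gt
        linarith
      have hsq : Real.sqrt (G μ1) < ε := by
        by_contra hge
        push_neg at hge
        nlinarith
      calc G μ1 = Real.sqrt (G μ1) ^ 2 := (Real.sq_sqrt (hGnonneg μ1)).symm
        _ < ε ^ 2 := by nlinarith [Real.sqrt_nonneg (G μ1)]
    have hmono : Set.Icc μ0 μ1 ⊆ Set.Ioi (0:ℝ) := fun x hx => lt_of_lt_of_le hμ0pos hx.1
    have hivt := intermediate_value_Icc' hμ0le (hGcont.mono hmono)
    have hmem : ε ^ 2 ∈ Set.Icc (G μ1) (G μ0) := ⟨hGμ1.le, hμ0⟩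
    obtain ⟨μs, hμs, hGμs⟩ := hivt hmem
    have hμspos : 0 < μs := lt_of_lt_of_le hμ0pos hμs.1
    refine ⟨μs, hμspos.le, fun η => ?_⟩
    have hfe : t ≤ (star (h + p μs) ⬝ᵥ (C *ᵥ (h + p μs))).re := hfeas hμspos (le_of_eq hGμs)
    have hk := hkey hμspos η
    rw [hGμs] at hk
    linarith

/-- Multi-receiver version of Lemma 1: for a Hermitian positive semidefinite
transmit covariance `C`, a finite family of estimated channels `h i` with error
bounds `ε i > 0`, the worst-case harvested energy of every receiver is at least
`t` iff there is a family of reals `μ i ≥ 0` making every block matrix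
`T_i = fromBlocks (μ_i I + C) (C h_i) ((C h_i)†) (h_i† C h_i − t − μ_i ε_i²)`
positive semidefinite; hence the SDP (6) has the same feasible pairs `(C, t)`
as the original robust max-min problem (2). -/
theorem robust_constraints_iff_lmis_family
    (K : ℕ) (hK : 1 ≤ K)
    (C : Matrix (Fin K) (Fin K) ℂ) (hC : C.PosSemidef)
    (t : ℝ) (ι : Type) [Fintype ι]
    (h : ι → Fin K → ℂ) (ε : ι → ℝ) (hε : ∀ i, 0 < ε i) :
    (∀ i : ι, ∀ η : Fin K → ℂ, Real.sqrt (∑ j, ‖η j‖ ^ 2) ≤ ε i →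
        t ≤ (star (h i + η) ⬝ᵥ (C *ᵥ (h i + η))).re) ↔
      ∃ μ : ι → ℝ, ∀ i : ι, 0 ≤ μ i ∧
        (Matrix.fromBlocks
          ((μ i : ℂ) • (1 : Matrix (Fin K) (Fin K) ℂ) + C)
          (Matrix.replicateCol (Fin 1) (C *ᵥ h i))
          (Matrix.replicateRow (Fin 1) (star (C *ᵥ h i)))
          (Matrix.of fun _ _ : Fin 1 =>
            star (h i) ⬝ᵥ (C *ᵥ h i) - (t : ℂ) - ((μ i * ε i ^ 2 : ℝ) : ℂ))).PosSemidef := by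
  constructor
  · intro hrobust
    choose μ hμ0 hμ using fun i =>
      forward_scalar hC (hε i) (h i) (fun η hn => hrobust i η hn)
    exact ⟨μ, fun i => ⟨hμ0 i, scalar_to_psd hC (μ i) t (ε i) (hμ0 i) (h i) (hμ i)⟩⟩
  · rintro ⟨μ, hμ⟩ i η hη
    exact psd_to_robust hC (μ i) t (ε i) (hμ i).1 (h i) (hμ i).2 η hη
end
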